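/- arXiv:2410.05751 — 6 statements merged into one kernel-verified Lean document; each statement's English description precedes it below -/
import Mathlib

section
/- Let A and B be real symmetric positive semi-definite n×n matrices, with A positive definite. If ‖A^{-1/2}(B−A)A^{-1/2}‖_sp < 1, then B is positive definite and ‖A^{1/2}(A^{-1}−B^{-1})A^{1/2}‖_F ≤ ‖A^{-1/2}(B−A)A^{-1/2}‖_F / (1 − ‖A^{-1/2}(B−A)A^{-1/2}‖_sp). -/
open scoped Matrix


noncomputable def frobNorm {n : ℕ} (A : Matrix (Fin n) (Fin n) ℝ) : ℝ :=
  Real.sqrt (∑ i, ∑ j, (A i j) ^ 2)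

noncomputable def spNorm {n : ℕ} (A : Matrix (Fin n) (Fin n) ℝ) : ℝ :=
  ‖Matrix.toEuclideanCLM (𝕜 := ℝ) A‖

/-- The old Mathlib `Matrix.PosSemidef.sqrt` (removed from Mathlib), with its old definition. -/
noncomputable def psdSqrt {n : ℕ} {A : Matrix (Fin n) (Fin n) ℝ} (hA : A.PosSemidef) :
    Matrix (Fin n) (Fin n) ℝ :=
  (hA.1.eigenvectorUnitary : Matrix (Fin n) (Fin n) ℝ) *
    Matrix.diagonal ((↑) ∘ Real.sqrt ∘ hA.1.eigenvalues) *
    (star (hA.1.eigenvectorUnitary : Matrix (Fin n) (Fin n) ℝ))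

lemma psdSqrt_mul_self {n : ℕ} {A : Matrix (Fin n) (Fin n) ℝ} (hA : A.PosSemidef) :
    psdSqrt hA * psdSqrt hA = A := by
  have hU : star (hA.1.eigenvectorUnitary : Matrix (Fin n) (Fin n) ℝ) *
      (hA.1.eigenvectorUnitary : Matrix (Fin n) (Fin n) ℝ) = 1 := Unitary.coe_star_mul_self _
  have hd : Matrix.diagonal (((↑) : ℝ → ℝ) ∘ Real.sqrt ∘ hA.1.eigenvalues) *
      Matrix.diagonal (((↑) : ℝ → ℝ) ∘ Real.sqrt ∘ hA.1.eigenvalues) =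
      Matrix.diagonal (RCLike.ofReal ∘ hA.1.eigenvalues) := by
    rw [Matrix.diagonal_mul_diagonal]
    congr 1; ext i
    simp [Real.mul_self_sqrt (hA.eigenvalues_nonneg i)]
  conv_rhs => rw [hA.1.spectral_theorem, Unitary.conjStarAlgAut_apply]
  simp only [psdSqrt]
  calc _ = (hA.1.eigenvectorUnitary : Matrix (Fin n) (Fin n) ℝ) *
      Matrix.diagonal (((↑) : ℝ → ℝ) ∘ Real.sqrt ∘ hA.1.eigenvalues) *
      (star (hA.1.eigenvectorUnitary : Matrix (Fin n) (Fin n) ℝ) *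
      (hA.1.eigenvectorUnitary : Matrix (Fin n) (Fin n) ℝ)) *
      Matrix.diagonal (((↑) : ℝ → ℝ) ∘ Real.sqrt ∘ hA.1.eigenvalues) *
      star (hA.1.eigenvectorUnitary : Matrix (Fin n) (Fin n) ℝ) := by simp only [mul_assoc]
    _ = _ := by rw [hU, mul_one, mul_assoc _ (Matrix.diagonal _) (Matrix.diagonal _), hd]

lemma frobNorm_nonneg {n : ℕ} (A : Matrix (Fin n) (Fin n) ℝ) : 0 ≤ frobNorm A :=
  Real.sqrt_nonneg _

lemma frob_mul_le {n : ℕ} (M N : Matrix (Fin n) (Fin n) ℝ) :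
    frobNorm (M * N) ≤ spNorm M * frobNorm N := by
  have hsp : (0:ℝ) ≤ spNorm M := norm_nonneg _
  rw [frobNorm, frobNorm, ← Real.sqrt_sq hsp, ← Real.sqrt_mul (sq_nonneg _)]
  apply Real.sqrt_le_sqrt
  have key : ∀ j : Fin n, ∑ i, ((M * N) i j) ^ 2 ≤ spNorm M ^ 2 * ∑ i, N i j ^ 2 := by
    intro j
    set v : EuclideanSpace ℝ (Fin n) := (WithLp.equiv 2 _).symm (fun i => N i j) with hv
    have hvnorm : ‖v‖ ^ 2 = ∑ i, N i j ^ 2 := by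
      rw [EuclideanSpace.norm_eq, Real.sq_sqrt (by positivity)]
      simp [hv, sq_abs]
    have happ : Matrix.toEuclideanCLM (𝕜 := ℝ) M v =
        (WithLp.equiv 2 _).symm (fun i => (M * N) i j) := by
      have hcol : (Matrix.toLin' M) (fun i => N i j) = fun i => (M * N) i j := by
        ext i
        simp [Matrix.toLin'_apply, Matrix.mulVec, Matrix.mul_apply, dotProduct]
      rw [hv, WithLp.equiv_symm_apply, Matrix.toEuclideanCLM_toLp, ← Matrix.toLin'_apply, hcol]
    have hTnorm : ‖Matrix.toEuclideanCLM (𝕜 := ℝ) M v‖ ^ 2 = ∑ i, ((M * N) i j) ^ 2 := by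
      rw [happ, EuclideanSpace.norm_eq, Real.sq_sqrt (by positivity)]
      simp [sq_abs]
    have hle : ‖Matrix.toEuclideanCLM (𝕜 := ℝ) M v‖ ≤ spNorm M * ‖v‖ :=
      (Matrix.toEuclideanCLM (𝕜 := ℝ) M).le_opNorm v
    calc ∑ i, ((M * N) i j) ^ 2 = ‖Matrix.toEuclideanCLM (𝕜 := ℝ) M v‖ ^ 2 := hTnorm.symm
      _ ≤ (spNorm M * ‖v‖) ^ 2 := by
          apply pow_le_pow_left₀ (norm_nonneg _) hle
      _ = spNorm M ^ 2 * ‖v‖ ^ 2 := by ring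
      _ = spNorm M ^ 2 * ∑ i, N i j ^ 2 := by rw [hvnorm]
  calc ∑ i, ∑ j, ((M * N) i j) ^ 2 = ∑ j, ∑ i, ((M * N) i j) ^ 2 := Finset.sum_comm
    _ ≤ ∑ j, spNorm M ^ 2 * ∑ i, N i j ^ 2 := Finset.sum_le_sum fun j _ => key j
    _ = spNorm M ^ 2 * ∑ j, ∑ i, N i j ^ 2 := (Finset.mul_sum _ _ _).symm
    _ = spNorm M ^ 2 * ∑ i, ∑ j, N i j ^ 2 := by rw [Finset.sum_comm]

set_option maxHeartbeats 1000000 in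
set_option synthInstance.maxHeartbeats 400000 in
theorem stmt0 {n : ℕ} (A B : Matrix (Fin n) (Fin n) ℝ)
    (hA : A.PosDef) (hB : B.PosSemidef)
    (h : spNorm ((psdSqrt hA.posSemidef)⁻¹ * (B - A) * (psdSqrt hA.posSemidef)⁻¹) < 1) :
    B.PosDef ∧
      frobNorm (psdSqrt hA.posSemidef * (A⁻¹ - B⁻¹) * psdSqrt hA.posSemidef) ≤
        frobNorm ((psdSqrt hA.posSemidef)⁻¹ * (B - A) * (psdSqrt hA.posSemidef)⁻¹) /
          (1 - spNorm ((psdSqrt hA.posSemidef)⁻¹ * (B - A) * (psdSqrt hA.posSemidef)⁻¹)) := by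
  set S : Matrix (Fin n) (Fin n) ℝ := psdSqrt hA.posSemidef with hSdef
  set E : Matrix (Fin n) (Fin n) ℝ := S⁻¹ * (B - A) * S⁻¹ with hEdef
  have hSS : S * S = A := psdSqrt_mul_self hA.posSemidef
  have hdetS : IsUnit S.det := by
    have hdd : S.det * S.det = A.det := by rw [← Matrix.det_mul, hSS]
    have hApos : 0 < A.det := hA.det_pos
    refine isUnit_iff_ne_zero.mpr (fun hc => ?_)
    rw [hc, mul_zero] at hdd
    exact (lt_irrefl _ (hdd ▸ hApos)).elim
  have hS1 : S * S⁻¹ = 1 := Matrix.mul_nonsing_inv _ hdetS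
  have hS2 : S⁻¹ * S = 1 := Matrix.nonsing_inv_mul _ hdetS
  -- invertibility of 1 + E via the CLM picture
  set f := Matrix.toEuclideanCLM (𝕜 := ℝ) (n := Fin n) with hfdef
  have hEnorm : ‖f E‖ < 1 := h
  have hUnitCLM : IsUnit (1 + f E) := by
    have := isUnit_one_sub_of_norm_lt_one (x := -(f E)) (by simpa using hEnorm)
    simpa [sub_neg_eq_add] using this
  have hUnit1E : IsUnit ((1 : Matrix (Fin n) (Fin n) ℝ) + E) := by
    have : IsUnit (f (1 + E)) := by
      simpa [map_add, map_one] using hUnitCLM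
    have h2 := this.map (Matrix.toEuclideanCLM (𝕜 := ℝ) (n := Fin n)).symm
    simpa [hfdef] using h2
  have hdet1E : IsUnit ((1 : Matrix (Fin n) (Fin n) ℝ) + E).det :=
    (Matrix.isUnit_iff_isUnit_det _).mp hUnit1E
  -- B = S * (1 + E) * S
  have hBeq : S * (1 + E) * S = B := by
    have hexp : S * (1 + E) * S =
        S * S + (S * S⁻¹) * (B - A) * (S⁻¹ * S) := by
      rw [hEdef]; noncomm_ring
    rw [hexp, hS1, hS2, one_mul, mul_one, hSS, add_sub_cancel]
  have hdetB : IsUnit B.det := by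
    rw [← hBeq, Matrix.det_mul, Matrix.det_mul]
    exact (hdetS.mul hdet1E).mul hdetS
  -- B is positive definite
  have hBpd : B.PosDef := by
    exact hB.posDef_iff_isUnit.mpr ((Matrix.isUnit_iff_isUnit_det _).mpr hdetB)
  refine ⟨hBpd, ?_⟩
  -- matrix identities
  have hAinv : A⁻¹ = S⁻¹ * S⁻¹ := by rw [← hSS, Matrix.mul_inv_rev]
  have h1A1 : S⁻¹ * A * S⁻¹ = 1 := by
    rw [← hSS, show S⁻¹ * (S * S) * S⁻¹ = (S⁻¹ * S) * (S * S⁻¹) from by noncomm_ring,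
      hS1, hS2, one_mul]
  have hIE : (1 : Matrix (Fin n) (Fin n) ℝ) + E = S⁻¹ * B * S⁻¹ := by
    have : S⁻¹ * B * S⁻¹ = S⁻¹ * A * S⁻¹ + S⁻¹ * (B - A) * S⁻¹ := by noncomm_ring
    rw [this, h1A1, ← hEdef]
  have hinv : ((1 : Matrix (Fin n) (Fin n) ℝ) + E)⁻¹ = S * B⁻¹ * S := by
    rw [hIE, Matrix.mul_inv_rev, Matrix.mul_inv_rev,
      Matrix.nonsing_inv_nonsing_inv _ hdetS, mul_assoc]
  have hL : S * (A⁻¹ - B⁻¹) * S = 1 - S * B⁻¹ * S := by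
    have hexp : S * (S⁻¹ * S⁻¹ - B⁻¹) * S = (S * S⁻¹) * (S⁻¹ * S) - S * B⁻¹ * S := by
      noncomm_ring
    rw [hAinv, hexp, hS1, hS2, one_mul]
  have hR : ((1 : Matrix (Fin n) (Fin n) ℝ) + E)⁻¹ * E = 1 - S * B⁻¹ * S := by
    have h2 : ((1 : Matrix (Fin n) (Fin n) ℝ) + E)⁻¹ * (1 + E) = 1 :=
      Matrix.nonsing_inv_mul _ hdet1E
    calc ((1 : Matrix (Fin n) (Fin n) ℝ) + E)⁻¹ * E
        = ((1 : Matrix (Fin n) (Fin n) ℝ) + E)⁻¹ * (1 + E) - (1 + E)⁻¹ := by noncomm_ring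
      _ = 1 - (1 + E)⁻¹ := by rw [h2]
      _ = 1 - S * B⁻¹ * S := by rw [hinv]
  have hM : S * (A⁻¹ - B⁻¹) * S = ((1 : Matrix (Fin n) (Fin n) ℝ) + E)⁻¹ * E := by
    rw [hL, hR]
  -- spectral norm bound for the inverse
  set C : Matrix (Fin n) (Fin n) ℝ := ((1 : Matrix (Fin n) (Fin n) ℝ) + E)⁻¹ with hCdef
  have hmulC : (1 + E) * C = 1 := Matrix.mul_nonsing_inv _ hdet1E
  have hfC : f C + f E * f C = 1 := by
    have := congrArg f hmulC
    rw [map_mul, map_add, map_one, add_mul, one_mul] at this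
    exact this
  have hCbound : spNorm C ≤ (1 - spNorm E)⁻¹ := by
    have heq : f C = 1 - f E * f C := by
      rw [eq_sub_iff_add_eq]
      exact hfC
    have hnorm1 : ‖(1 : EuclideanSpace ℝ (Fin n) →L[ℝ] EuclideanSpace ℝ (Fin n))‖ ≤ 1 :=
      ContinuousLinearMap.norm_id_le
    have hle : ‖f C‖ ≤ 1 + ‖f E‖ * ‖f C‖ := by
      calc ‖f C‖ = ‖(1 : EuclideanSpace ℝ (Fin n) →L[ℝ] EuclideanSpace ℝ (Fin n)) - f E * f C‖ := by
            rw [← heq]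
        _ ≤ ‖(1 : EuclideanSpace ℝ (Fin n) →L[ℝ] EuclideanSpace ℝ (Fin n))‖ + ‖f E * f C‖ :=
            norm_sub_le _ _
        _ ≤ 1 + ‖f E‖ * ‖f C‖ := add_le_add hnorm1 (norm_mul_le _ _)
    have hpos : 0 < 1 - ‖f E‖ := by linarith
    have hCnn : (0:ℝ) ≤ ‖f C‖ := norm_nonneg _
    have hkey : ‖f C‖ ≤ 1 / (1 - ‖f E‖) := by
      rw [le_div_iff₀ hpos]
      nlinarith
    calc spNorm C = ‖f C‖ := rfl
      _ ≤ 1 / (1 - ‖f E‖) := hkey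
      _ = (1 - spNorm E)⁻¹ := by rw [one_div]; rfl
  have hEsp : spNorm E < 1 := h
  have hspos : 0 < 1 - spNorm E := by linarith
  calc frobNorm (S * (A⁻¹ - B⁻¹) * S) = frobNorm (C * E) := by rw [hM]
    _ ≤ spNorm C * frobNorm E := frob_mul_le _ _
    _ ≤ (1 - spNorm E)⁻¹ * frobNorm E :=
        mul_le_mul_of_nonneg_right hCbound (frobNorm_nonneg E)
    _ = frobNorm E / (1 - spNorm E) := by
        rw [div_eq_mul_inv, mul_comm]
end

section
/- Let D be a nonzero real symmetric n×n matrix with eigenvalues λ_1,…,λ_n (with multiplicity). Then ∏_{j=1}^n (1 + 4λ_j^2)^{-1/4} ≤ (1 + 2‖D‖_F^2/n)^{-‖D‖_F^2/(8‖D‖_sp^2)}. -/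
lemma abs_eigenvalue_le_spNorm {n : ℕ} (hn : 0 < n) (D : Matrix (Fin n) (Fin n) ℝ)
    (hD : D.IsHermitian) (j : Fin n) : |hD.eigenvalues j| ≤ spNorm D := by
  haveI : Nontrivial (EuclideanSpace ℝ (Fin n)) := by
    have : Nonempty (Fin n) := ⟨⟨0, hn⟩⟩
    exact inferInstance
  have h1 : hD.eigenvalues j ∈ spectrum ℝ D := hD.eigenvalues_mem_spectrum_real j
  have h2 : spectrum ℝ (Matrix.toEuclideanCLM (𝕜 := ℝ) D) = spectrum ℝ D :=
    AlgEquiv.spectrum_eq (Matrix.toEuclideanCLM (𝕜 := ℝ) : Matrix (Fin n) (Fin n) ℝ ≃⋆ₐ[ℝ] _) D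
  have h3 : hD.eigenvalues j ∈ spectrum ℝ (Matrix.toEuclideanCLM (𝕜 := ℝ) D) := h2 ▸ h1
  simpa [Real.norm_eq_abs, spNorm] using spectrum.norm_le_norm_of_mem h3

lemma frob_sq_eq_sum_eig_sq {n : ℕ} (D : Matrix (Fin n) (Fin n) ℝ) (hD : D.IsHermitian) :
    ∑ i, ∑ j, (D i j)^2 = ∑ j, hD.eigenvalues j ^ 2 := by
  set U : Matrix (Fin n) (Fin n) ℝ := (hD.eigenvectorUnitary : Matrix (Fin n) (Fin n) ℝ) with hUdef
  have hU : U * star U = 1 := (Matrix.mem_unitaryGroup_iff).mp hD.eigenvectorUnitary.2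
  have h : star U * D * U = Matrix.diagonal (RCLike.ofReal ∘ hD.eigenvalues) := by
    have := hD.conjStarAlgAut_star_eigenvectorUnitary
    rw [Unitary.conjStarAlgAut_apply] at this
    rw [hUdef]; simpa using this
  have hDD : star U * (D * D) * U = Matrix.diagonal (fun j => hD.eigenvalues j ^ 2) := by
    have e1 : (star U * D * U) * (star U * D * U) = star U * (D * D) * U := by
      simp only [Matrix.mul_assoc]
      rw [← Matrix.mul_assoc U (star U), hU, Matrix.one_mul]
    rw [← e1, h, Matrix.diagonal_mul_diagonal]
    congr 1
    funext j
    simp [sq]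
  have tr1 : (D * D).trace = ∑ j, hD.eigenvalues j ^ 2 := by
    have : (star U * (D * D) * U).trace = (D * D).trace := by
      rw [Matrix.trace_mul_comm, ← Matrix.mul_assoc, hU, Matrix.one_mul]
    rw [← this, hDD, Matrix.trace_diagonal]
  rw [← tr1]
  have hsym : ∀ i j, D j i = D i j := fun i j => by
    conv_lhs => rw [← hD]
    simp [Matrix.conjTranspose_apply]
  simp only [Matrix.trace, Matrix.diag, Matrix.mul_apply]
  exact Finset.sum_congr rfl fun i _ => Finset.sum_congr rfl fun j _ => by
    rw [hsym i j, sq]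

lemma log_lin_le {x a : ℝ} (hx : 0 ≤ x) (hxa : x ≤ a) :
    x / a * Real.log (1 + a) ≤ Real.log (1 + x) := by
  rcases eq_or_lt_of_le (hx.trans hxa) with h | ha
  · have hx0 : x = 0 := le_antisymm (hxa.trans h.symm.le) hx
    simp [← h, hx0]
  · have h1 : (1 : ℝ) ∈ Set.Ioi (0 : ℝ) := by norm_num
    have h2 : (1 + a : ℝ) ∈ Set.Ioi (0 : ℝ) := by simp; linarith
    have hb0 : 0 ≤ x / a := div_nonneg hx ha.le
    have hb1 : (1 - x / a) + x / a = 1 := by ring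
    have hc := strictConcaveOn_log_Ioi.concaveOn.2 h1 h2
      (by rw [sub_nonneg]; exact div_le_one_of_le₀ hxa ha.le) hb0 hb1
    have he : (1 - x / a) • (1:ℝ) + (x / a) • (1 + a) = 1 + x := by
      field_simp
      rw [smul_eq_mul, smul_eq_mul, div_mul_eq_mul_div, div_mul_eq_mul_div, ← add_div, div_eq_iff ha.ne']; ring
    rw [he] at hc
    calc x / a * Real.log (1 + a)
        = (1 - x / a) • Real.log 1 + (x / a) • Real.log (1 + a) := by
          simp [smul_eq_mul]
      _ ≤ Real.log (1 + x) := hc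

theorem stmt1 {n : ℕ} (D : Matrix (Fin n) (Fin n) ℝ) (hD : D.IsHermitian) (hD0 : D ≠ 0) :
    ∏ j, (1 + 4 * hD.eigenvalues j ^ 2) ^ (-(1 / 4 : ℝ)) ≤
      (1 + 2 * frobNorm D ^ 2 / n) ^ (-(frobNorm D ^ 2) / (8 * spNorm D ^ 2)) := by
  have hn : 0 < n := by
    rcases Nat.eq_zero_or_pos n with h | h
    · exfalso; apply hD0; subst h; ext i; exact absurd i.2 (by omega)
    · exact h
  -- positivity of spNorm
  have hs : 0 < spNorm D := by
    rw [spNorm, norm_pos_iff]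
    intro hcl
    apply hD0
    apply (Matrix.toEuclideanCLM (𝕜 := ℝ) (n := Fin n)).injective
    show Matrix.toEuclideanCLM (𝕜 := ℝ) D = Matrix.toEuclideanCLM (𝕜 := ℝ) 0
    rw [hcl, map_zero]
  set s := spNorm D with hsdef
  set F : ℝ := frobNorm D ^ 2 with hFdef
  have hF : F = ∑ j, hD.eigenvalues j ^ 2 := by
    rw [hFdef, frobNorm, Real.sq_sqrt (by positivity)]
    exact frob_sq_eq_sum_eig_sq D hD
  have hFpos : 0 ≤ F := by rw [hFdef]; positivity
  have heig : ∀ j, hD.eigenvalues j ^ 2 ≤ s ^ 2 := fun j => by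
    have := abs_eigenvalue_le_spNorm hn D hD j
    calc hD.eigenvalues j ^ 2 = |hD.eigenvalues j| ^ 2 := (sq_abs _).symm
      _ ≤ s ^ 2 := pow_le_pow_left₀ (abs_nonneg _) this 2
  have hFle : F ≤ n * s ^ 2 := by
    rw [hF]
    calc ∑ j, hD.eigenvalues j ^ 2 ≤ ∑ _j : Fin n, s ^ 2 := Finset.sum_le_sum fun j _ => heig j
      _ = n * s ^ 2 := by simp [mul_comm]
  -- rewrite both sides as exp
  have hLHS : ∏ j, (1 + 4 * hD.eigenvalues j ^ 2) ^ (-(1 / 4 : ℝ)) =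
      Real.exp (∑ j, Real.log (1 + 4 * hD.eigenvalues j ^ 2) * (-(1/4 : ℝ))) := by
    rw [Real.exp_sum]
    exact Finset.prod_congr rfl fun j _ => Real.rpow_def_of_pos (by positivity) _
  have hRHS : (1 + 2 * F / n) ^ (-F / (8 * s ^ 2)) =
      Real.exp (Real.log (1 + 2 * F / n) * (-F / (8 * s ^ 2))) := by
    have : (0:ℝ) < 1 + 2 * F / n := by
      have : (0:ℝ) ≤ 2 * F / n := by positivity
      linarith
    exact Real.rpow_def_of_pos this _
  rw [hLHS, hRHS, Real.exp_le_exp]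
  -- key inequality
  have hnR : (0:ℝ) < n := by exact_mod_cast hn
  have hFn : 2 * F / n ≤ 2 * s ^ 2 := by
    rw [div_le_iff₀ hnR]
    nlinarith
  have step1 : ∀ j, hD.eigenvalues j ^ 2 / s ^ 2 * Real.log (1 + 4 * s ^ 2) ≤
      Real.log (1 + 4 * hD.eigenvalues j ^ 2) := fun j => by
    have := log_lin_le (x := 4 * hD.eigenvalues j ^ 2) (a := 4 * s ^ 2)
      (by positivity) (by nlinarith [heig j])
    have hrw : 4 * hD.eigenvalues j ^ 2 / (4 * s ^ 2) = hD.eigenvalues j ^ 2 / s ^ 2 := by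
      rw [mul_div_mul_left _ _ (by norm_num : (4:ℝ) ≠ 0)]
    rwa [hrw] at this
  have step2 : F / s ^ 2 * Real.log (1 + 4 * s ^ 2) ≤
      ∑ j, Real.log (1 + 4 * hD.eigenvalues j ^ 2) := by
    calc F / s ^ 2 * Real.log (1 + 4 * s ^ 2)
        = ∑ j, hD.eigenvalues j ^ 2 / s ^ 2 * Real.log (1 + 4 * s ^ 2) := by
          rw [← Finset.sum_mul, ← Finset.sum_div, ← hF]
      _ ≤ _ := Finset.sum_le_sum fun j _ => step1 j
  have step3 : Real.log (1 + 2 * F / n) ≤ 2 * Real.log (1 + 4 * s ^ 2) := by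
    have hb : (0:ℝ) < 1 + 4 * s ^ 2 := by positivity
    have h2 : Real.log ((1 + 4 * s ^ 2) ^ 2) = 2 * Real.log (1 + 4 * s ^ 2) := by
      rw [Real.log_pow]; push_cast; ring
    rw [← h2]
    apply Real.log_le_log (by positivity)
    nlinarith
  have hlogpos : 0 ≤ Real.log (1 + 4 * s ^ 2) := Real.log_nonneg (by nlinarith)
  have final : F / (8 * s ^ 2) * Real.log (1 + 2 * F / n) ≤
      (1/4 : ℝ) * ∑ j, Real.log (1 + 4 * hD.eigenvalues j ^ 2) := by
    calc F / (8 * s ^ 2) * Real.log (1 + 2 * F / n)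
        ≤ F / (8 * s ^ 2) * (2 * Real.log (1 + 4 * s ^ 2)) :=
          mul_le_mul_of_nonneg_left step3 (by positivity)
      _ = (1/4 : ℝ) * (F / s ^ 2 * Real.log (1 + 4 * s ^ 2)) := by
          field_simp; ring
      _ ≤ _ := mul_le_mul_of_nonneg_left step2 (by norm_num)
  have := neg_le_neg final
  calc ∑ j, Real.log (1 + 4 * hD.eigenvalues j ^ 2) * (-(1/4 : ℝ))
      = -((1/4 : ℝ) * ∑ j, Real.log (1 + 4 * hD.eigenvalues j ^ 2)) := by
        rw [← Finset.sum_mul]; ring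
    _ ≤ -(F / (8 * s ^ 2) * Real.log (1 + 2 * F / n)) := this
    _ = Real.log (1 + 2 * F / n) * (-F / (8 * s ^ 2)) := by ring
end

section
/- Let K ≥ 2 be an integer, n > 0 a real number, and a a real number with a > K/2 + 1. Then for every R ≥ 0, ∫_{{t ∈ ℝ^K : ‖t‖ ≥ R}} (1 + ‖t‖^2/n)^{-a} dt ≤ (nπ)^{K/2} · (1 + R^2/n)^{-a + K/2 + 1} / Γ(K/2), where ‖t‖ is the Euclidean norm, the integral is with respect to K-dimensional Lebesgue measure, and Γ is the gamma function. -/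
open MeasureTheory Set Filter

private lemma stmt2_hderiv (n : ℝ) (hn : 0 < n) (b : ℝ) (hb : b ≠ 0) (y : ℝ) :
    HasDerivAt (fun y : ℝ => n / (2 * b) * (1 + y ^ 2 / n) ^ b)
      (y * (1 + y ^ 2 / n) ^ (b - 1)) y := by
  have h1 : HasDerivAt (fun y : ℝ => 1 + y ^ 2 / n) (2 * y / n) y := by
    simpa using ((hasDerivAt_pow 2 y).div_const n).const_add 1
  have hpos : (0:ℝ) < 1 + y ^ 2 / n := by positivity
  have h2 := h1.rpow_const (p := b) (Or.inl hpos.ne')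
  have := h2.const_mul (n / (2 * b))
  refine this.congr_deriv ?_
  have := hn.ne'
  field_simp

private lemma stmt2_radial (n : ℝ) (hn : 0 < n) (b : ℝ) (hb : b < 0) (R : ℝ) (hR : 0 ≤ R) :
    (∫ y in Ioi R, y * (1 + y ^ 2 / n) ^ (b - 1)) =
      n / (2 * (-b)) * (1 + R ^ 2 / n) ^ b ∧
    IntegrableOn (fun y => y * (1 + y ^ 2 / n) ^ (b - 1)) (Ioi R) := by
  have hb' : b ≠ 0 := hb.ne
  have hd := fun y (_ : y ∈ Ici R) => stmt2_hderiv n hn b hb' y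
  have hpos : ∀ y ∈ Ioi R, 0 ≤ y * (1 + y ^ 2 / n) ^ (b - 1) := by
    intro y hy
    have : (0:ℝ) ≤ y := le_trans hR (le_of_lt hy)
    positivity
  have htend : Tendsto (fun y : ℝ => n / (2 * b) * (1 + y ^ 2 / n) ^ b) atTop (nhds 0) := by
    have h1 : Tendsto (fun y : ℝ => 1 + y ^ 2 / n) atTop atTop := by
      apply tendsto_atTop_add_const_left
      exact (tendsto_pow_atTop two_ne_zero).atTop_div_const hn
    have h2 : Tendsto (fun x : ℝ => x ^ b) atTop (nhds 0) := by
      simpa using tendsto_rpow_neg_atTop (y := -b) (by linarith)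
    have := (h2.comp h1).const_mul (n / (2 * b))
    simpa using this
  constructor
  · rw [MeasureTheory.integral_Ioi_of_hasDerivAt_of_nonneg' hd hpos htend]
    rw [zero_sub]
    rw [show n / (2 * -b) = -(n / (2 * b)) by field_simp]
    ring
  · exact MeasureTheory.integrableOn_Ioi_deriv_of_nonneg' hd hpos htend

private lemma stmt2_field (k G d P N m w : ℝ) (hk : k ≠ 0) (hG : G ≠ 0) (hd : d ≠ 0) :
    k * (P / ((k/2) * G)) * (N * (m / (2 * d) * w)) = P * (N * m) / G * (w / d) := by
  field_simp

private lemma stmt2_polar (K : ℕ) (hK : 2 ≤ K) (n : ℝ) (a : ℝ) (R : ℝ) (hR : 0 ≤ R) :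
    ∫ t in {t : EuclideanSpace ℝ (Fin K) | R ≤ ‖t‖}, (1 + ‖t‖ ^ 2 / n) ^ (-a) ∂volume =
      K * (volume (Metric.ball (0 : EuclideanSpace ℝ (Fin K)) 1)).toReal *
        ∫ y in Ioi R, y ^ (K - 1) * (1 + y ^ 2 / n) ^ (-a) := by
  set E := EuclideanSpace ℝ (Fin K)
  have hfr : Module.finrank ℝ E = K := finrank_euclideanSpace_fin
  haveI : Nontrivial E := Module.nontrivial_of_finrank_pos (R := ℝ) (M := E)
    (by rw [hfr]; omega)
  set g : ℝ → ℝ := fun y => (1 + y ^ 2 / n) ^ (-a) with hg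
  have hset : MeasurableSet {t : E | R ≤ ‖t‖} :=
    (isClosed_le continuous_const continuous_norm).measurableSet
  have h1 : (∫ t in {t : E | R ≤ ‖t‖}, (1 + ‖t‖ ^ 2 / n) ^ (-a) ∂volume)
      = ∫ t : E, (Ici R).indicator g ‖t‖ ∂volume := by
    rw [← integral_indicator hset]
    simp [Set.indicator_apply, hg]
  have h2 : ∀ y : ℝ, y ^ (K - 1) • (Ici R).indicator g y
      = (Ici R).indicator (fun y => y ^ (K - 1) * g y) y := by
    intro y
    by_cases hy : y ∈ Ici R
    · rw [indicator_of_mem hy, indicator_of_mem hy, smul_eq_mul]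
    · rw [indicator_of_notMem hy, indicator_of_notMem hy, smul_zero]
  have h3 : (∫ y in Ioi (0:ℝ), y ^ (K - 1) • (Ici R).indicator g y)
      = ∫ y in Ioi R, y ^ (K - 1) * g y := by
    simp_rw [h2]
    rw [setIntegral_indicator measurableSet_Ici]
    apply setIntegral_congr_set
    have e1 : ((Set.Ioi (0:ℝ) ∩ Set.Ici R : Set ℝ)) =ᵐ[volume]
        ((Set.Ioi (0:ℝ) ∩ Set.Ioi R : Set ℝ)) :=
      (Filter.EventuallyEq.refl _ _).inter Ioi_ae_eq_Ici.symm
    have e2 : Set.Ioi (0:ℝ) ∩ Set.Ioi R = Set.Ioi R := by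
      rw [Set.inter_eq_right]
      intro y hy
      exact lt_of_le_of_lt hR hy
    exact e1.trans (by rw [e2]; exact Filter.EventuallyEq.rfl)
  rw [h1, integral_fun_norm_addHaar volume ((Ici R).indicator g), hfr,
    nsmul_eq_mul, smul_eq_mul, h3, mul_assoc]
  rfl

private lemma stmt2_ptwise (K : ℕ) (hK : 2 ≤ K) (n : ℝ) (hn : 0 < n) (a : ℝ)
    (y : ℝ) (hy : 0 < y) :
    y ^ (K - 1) * (1 + y ^ 2 / n) ^ (-a) ≤
      n ^ ((K:ℝ)/2 - 1) * (y * (1 + y ^ 2 / n) ^ (((K:ℝ)/2 - a) - 1)) := by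
  set e : ℝ := (K:ℝ)/2 - 1 with he
  have hK2 : (2:ℝ) ≤ K := by exact_mod_cast hK
  have he0 : 0 ≤ e := by simp only [he]; linarith
  have hu : (0:ℝ) < 1 + y ^ 2 / n := by positivity
  have h1 : (y:ℝ) ^ (K - 2 : ℕ) = (y ^ 2) ^ e := by
    have : ((K - 2 : ℕ) : ℝ) = 2 * e := by
      rw [Nat.cast_sub hK]; push_cast; ring
    rw [← Real.rpow_natCast y (K - 2), this, Real.rpow_mul hy.le, Real.rpow_two]
  have h2 : (y ^ 2 : ℝ) ^ e ≤ (n + y ^ 2) ^ e :=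
    Real.rpow_le_rpow (sq_nonneg y) (by linarith) he0
  have h3 : ((n + y ^ 2 : ℝ)) ^ e = n ^ e * (1 + y ^ 2 / n) ^ e := by
    rw [← Real.mul_rpow hn.le hu.le]
    congr 1
    field_simp
  have key : (y:ℝ) ^ (K - 2 : ℕ) ≤ n ^ e * (1 + y ^ 2 / n) ^ e := by
    rw [h1, ← h3]; exact h2
  have hKK : K - 1 = (K - 2) + 1 := by omega
  rw [hKK, pow_succ]
  calc y ^ (K - 2 : ℕ) * y * (1 + y ^ 2 / n) ^ (-a)
      ≤ n ^ e * (1 + y ^ 2 / n) ^ e * (y * (1 + y ^ 2 / n) ^ (-a)) := by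
        rw [mul_assoc]
        apply mul_le_mul_of_nonneg_right key
        positivity
    _ = n ^ e * (y * (1 + y ^ 2 / n) ^ (((K:ℝ)/2 - a) - 1)) := by
        rw [show ((K:ℝ)/2 - a) - 1 = e + (-a) by simp only [he]; ring,
          Real.rpow_add hu]
        ring

theorem stmt2 (K : ℕ) (hK : 2 ≤ K) (n : ℝ) (hn : 0 < n) (a : ℝ) (ha : K / 2 + 1 < a)
    (R : ℝ) (hR : 0 ≤ R) :
    ∫ t in {t : EuclideanSpace ℝ (Fin K) | R ≤ ‖t‖}, (1 + ‖t‖ ^ 2 / n) ^ (-a) ∂volume ≤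
      (n * Real.pi) ^ ((K : ℝ) / 2) * (1 + R ^ 2 / n) ^ (-a + K / 2 + 1) /
        Real.Gamma (K / 2) := by
  have hK2 : (2:ℝ) ≤ K := by exact_mod_cast hK
  set b : ℝ := (K:ℝ)/2 - a with hb_def
  have hb1 : b < -1 := by simp only [hb_def]; linarith
  have hb0 : b < 0 := by linarith
  set e : ℝ := (K:ℝ)/2 - 1 with he_def
  set u : ℝ := 1 + R ^ 2 / n with hu_def
  have hu1 : (1:ℝ) ≤ u := by
    have : 0 ≤ R ^ 2 / n := by positivity
    simp only [hu_def]; linarith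
  have hu0 : (0:ℝ) < u := lt_of_lt_of_le one_pos hu1
  obtain ⟨hrad_eq, hrad_int⟩ := stmt2_radial n hn b hb0 R hR
  -- integrability of the majorant and of the integrand
  have hmaj_int : IntegrableOn
      (fun y => n ^ e * (y * (1 + y ^ 2 / n) ^ (b - 1))) (Ioi R) :=
    hrad_int.const_mul _
  have hf_cont : Continuous fun y : ℝ => y ^ (K - 1) * (1 + y ^ 2 / n) ^ (-a) := by
    apply Continuous.mul (continuous_pow _)
    apply Continuous.rpow_const
    · exact (continuous_const.add ((continuous_pow 2).div_const n))
    · intro y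
      left
      have : (0:ℝ) < 1 + y ^ 2 / n := by positivity
      exact this.ne'
  have hf_int : IntegrableOn
      (fun y => y ^ (K - 1) * (1 + y ^ 2 / n) ^ (-a)) (Ioi R) := by
    apply hmaj_int.mono' hf_cont.aestronglyMeasurable.restrict
    filter_upwards [ae_restrict_mem measurableSet_Ioi] with y hy
    have hy0 : 0 < y := lt_of_le_of_lt hR hy
    rw [Real.norm_eq_abs, abs_of_nonneg (by positivity)]
    exact stmt2_ptwise K hK n hn a y hy0
  -- the radial integral bound
  have hI : (∫ y in Ioi R, y ^ (K - 1) * (1 + y ^ 2 / n) ^ (-a))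
      ≤ n ^ e * (n / (2 * (-b)) * u ^ b) := by
    have := setIntegral_mono_on hf_int hmaj_int measurableSet_Ioi
      (fun y hy => stmt2_ptwise K hK n hn a y (lt_of_le_of_lt hR hy))
    rw [integral_const_mul, hrad_eq] at this
    exact this
  rw [stmt2_polar K hK n a R hR]
  set V := (volume (Metric.ball (0 : EuclideanSpace ℝ (Fin K)) 1)).toReal with hV_def
  have hV_nonneg : 0 ≤ V := ENNReal.toReal_nonneg
  have step1 : (K:ℝ) * V * (∫ y in Ioi R, y ^ (K - 1) * (1 + y ^ 2 / n) ^ (-a))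
      ≤ (K:ℝ) * V * (n ^ e * (n / (2 * (-b)) * u ^ b)) := by
    apply mul_le_mul_of_nonneg_left hI
    positivity
  refine le_trans step1 ?_
  -- now pure arithmetic
  have hG_pos : 0 < Real.Gamma ((K:ℝ)/2) := Real.Gamma_pos_of_pos (by linarith)
  haveI : Nonempty (Fin K) := ⟨⟨0, by omega⟩⟩
  have hV_eq : V = Real.sqrt Real.pi ^ K / Real.Gamma ((K:ℝ)/2 + 1) := by
    rw [hV_def, EuclideanSpace.volume_ball, Fintype.card_fin]
    simp [ENNReal.toReal_ofReal (by positivity :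
      (0:ℝ) ≤ Real.sqrt Real.pi ^ K / Real.Gamma ((K:ℝ)/2 + 1))]
  have hG1 : Real.Gamma ((K:ℝ)/2 + 1) = ((K:ℝ)/2) * Real.Gamma ((K:ℝ)/2) :=
    Real.Gamma_add_one (by positivity)
  have hsp : Real.sqrt Real.pi ^ K = Real.pi ^ ((K:ℝ)/2) := by
    rw [Real.sqrt_eq_rpow, ← Real.rpow_natCast (Real.pi ^ ((1:ℝ)/2)) K,
      ← Real.rpow_mul Real.pi_pos.le]
    congr 1
    ring
  have hne : n ^ e * n = n ^ ((K:ℝ)/2) := by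
    nth_rewrite 2 [← Real.rpow_one n]
    rw [← Real.rpow_add hn]
    congr 1
    simp only [he_def]; ring
  have hmr : (n * Real.pi) ^ ((K:ℝ)/2) = n ^ ((K:ℝ)/2) * Real.pi ^ ((K:ℝ)/2) :=
    Real.mul_rpow hn.le Real.pi_pos.le
  have hexp : -a + (K:ℝ) / 2 + 1 = b + 1 := by simp only [hb_def]; ring
  have hamk : (1:ℝ) < a - (K:ℝ)/2 := by linarith
  have lhs_eq : (K:ℝ) * V * (n ^ e * (n / (2 * (-b)) * u ^ b))
      = (Real.pi ^ ((K:ℝ)/2) * n ^ ((K:ℝ)/2) / Real.Gamma ((K:ℝ)/2))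
          * (u ^ b / (a - (K:ℝ)/2)) := by
    rw [hV_eq, hG1, hsp, ← hne]
    have hnb : -b = a - (K:ℝ)/2 := by simp only [hb_def]; ring
    rw [hnb]
    exact stmt2_field (K:ℝ) _ _ _ _ _ _ (by linarith) hG_pos.ne' (by linarith)
  rw [lhs_eq, hexp]
  rw [div_eq_mul_inv ((n * Real.pi) ^ ((K:ℝ)/2) * u ^ (b+1)), hmr]
  have key : u ^ b / (a - (K:ℝ)/2) ≤ u ^ (b + 1) := by
    have h1 : u ^ b / (a - (K:ℝ)/2) ≤ u ^ b := by
      apply div_le_self (Real.rpow_nonneg hu0.le b) hamk.le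
    have h2 : u ^ b ≤ u ^ (b + 1) :=
      Real.rpow_le_rpow_of_exponent_le hu1 (by linarith)
    linarith
  calc (Real.pi ^ ((K:ℝ)/2) * n ^ ((K:ℝ)/2) / Real.Gamma ((K:ℝ)/2))
        * (u ^ b / (a - (K:ℝ)/2))
      ≤ (Real.pi ^ ((K:ℝ)/2) * n ^ ((K:ℝ)/2) / Real.Gamma ((K:ℝ)/2)) * u ^ (b+1) := by
        apply mul_le_mul_of_nonneg_left key
        positivity
    _ = n ^ ((K:ℝ)/2) * Real.pi ^ ((K:ℝ)/2) * u ^ (b + 1) * (Real.Gamma ((K:ℝ)/2))⁻¹ := by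
        rw [div_eq_mul_inv]
        ring
end

section
/- Let X be a standard Gaussian random vector in ℝ^n (independent N(0,1) components) and let D be a real symmetric n×n matrix with eigenvalues λ_1,…,λ_n (with multiplicity). Then E[exp(i·X^⊤ D X)] = ∏_{j=1}^n (1 − 2iλ_j)^{-1/2}, where for each j, (1 − 2iλ_j)^{-1/2} = exp(−(1/2)·Log(1 − 2iλ_j)) with Log the principal branch of the complex logarithm. -/
open MeasureTheory ProbabilityTheory Matrix Complex
open scoped Real NNReal ENNReal

lemma eq_of_sq_eq_sq' {z w : ℂ} (h : z ^ 2 = w ^ 2) (hz : 0 < z.re) (hw : 0 < w.re) : z = w := by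
  have h2 : (z - w) * (z + w) = 0 := by ring_nf; linear_combination h
  rcases mul_eq_zero.1 h2 with h | h
  · exact sub_eq_zero.mp h
  · exfalso
    have : (z + w).re = 0 := by rw [h]; simp
    simp only [Complex.add_re] at this; linarith

lemma exp_mul_log_re_pos {c : ℂ} (hc : 0 < c.re) {r : ℝ} (hr : |r| ≤ 1/2) :
    0 < (Complex.exp ((r : ℂ) * Complex.log c)).re := by
  have harg : |c.arg| < Real.pi / 2 := by
    rw [Complex.abs_arg_lt_pi_div_two_iff]; left; exact hc
  have him : ((r : ℂ) * Complex.log c).im = r * c.arg := by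
    simp [Complex.log_im]
  rw [Complex.exp_re, him]
  apply mul_pos (Real.exp_pos _)
  apply Real.cos_pos_of_mem_Ioo
  constructor
  · nlinarith [abs_nonneg r, abs_le.mp hr, abs_lt.mp harg, neg_abs_le (r * c.arg),
      abs_mul r c.arg, Real.pi_pos]
  · nlinarith [abs_le.mp hr, abs_lt.mp harg, le_abs_self (r * c.arg),
      abs_mul r c.arg, Real.pi_pos, abs_nonneg c.arg]

lemma onedim (l : ℝ) :
    ∫ x : ℝ, Complex.exp (Complex.I * (l : ℂ) * (x : ℂ) ^ 2) ∂(gaussianReal 0 1)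
      = Complex.exp (-(1/2 : ℂ) * Complex.log (1 - 2 * Complex.I * (l : ℂ))) := by
  set b : ℂ := 1/2 - Complex.I * l with hbdef
  have hb : 0 < b.re := by simp [hbdef]
  have hb0 : b ≠ 0 := by intro h; rw [h] at hb; simp at hb
  have h2b : (1 : ℂ) - 2 * Complex.I * l = 2 * b := by rw [hbdef]; ring
  have h2bre : (0:ℝ) < ((2:ℂ) * b).re := by simp [hbdef]
  have h2b0 : (2:ℂ) * b ≠ 0 := by intro h; rw [h] at h2bre; simp at h2bre
  -- rewrite the gaussian integral
  rw [gaussianReal_of_var_ne_zero 0 one_ne_zero]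
  have hpdf_meas : Measurable fun x => Real.toNNReal (gaussianPDFReal 0 1 x) :=
    (measurable_gaussianPDFReal 0 1).real_toNNReal
  have hdens : (gaussianPDF 0 1) = fun x => ((Real.toNNReal (gaussianPDFReal 0 1 x) : ℝ≥0) : ℝ≥0∞) := rfl
  rw [hdens, integral_withDensity_eq_integral_smul hpdf_meas]
  have hpt : ∀ x : ℝ, Real.toNNReal (gaussianPDFReal 0 1 x) • Complex.exp (Complex.I * l * (x:ℂ)^2)
      = ((Real.sqrt (2 * Real.pi))⁻¹ : ℝ) • Complex.exp (-b * (x:ℂ)^2) := by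
    intro x
    have hnn := gaussianPDFReal_nonneg 0 1 x
    rw [NNReal.smul_def, Real.coe_toNNReal _ hnn]
    have : gaussianPDFReal 0 1 x = (Real.sqrt (2 * Real.pi))⁻¹ * Real.exp (-(x^2)/2) := by
      simp [gaussianPDFReal]
    rw [this, Complex.real_smul, Complex.real_smul, Complex.ofReal_mul, Complex.ofReal_exp,
      mul_assoc, ← Complex.exp_add]
    congr 1
    rw [hbdef]; push_cast; ring
  simp_rw [hpt]
  rw [integral_smul, integral_gaussian_complex hb, h2b]
  -- now pure algebra
  have hπb0 : (↑Real.pi : ℂ) / b ≠ 0 := by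
    apply div_ne_zero _ hb0
    exact_mod_cast Complex.ofReal_ne_zero.mpr Real.pi_ne_zero
  have hπbre : 0 < ((↑Real.pi : ℂ) / b).re := by
    rw [Complex.div_re]
    have h1 : 0 < Complex.normSq b := Complex.normSq_pos.mpr hb0
    have : ((Real.pi : ℂ)).re = Real.pi := rfl
    have h2 : ((Real.pi : ℂ)).im = 0 := rfl
    rw [h2]
    simp only [this, zero_mul, zero_div, add_zero]
    positivity
  apply eq_of_sq_eq_sq'
  · -- squares agree
    rw [smul_pow, Complex.cpow_def_of_ne_zero hπb0]
    rw [← Complex.exp_nat_mul]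
    have : (2:ℕ) * (Complex.log (↑Real.pi / b) * (1/2 : ℂ)) = Complex.log (↑Real.pi / b) := by
      push_cast; ring
    rw [this, Complex.exp_log hπb0]
    rw [← Complex.exp_nat_mul]
    have : (2:ℕ) * (-(1 / 2 : ℂ) * Complex.log (2 * b)) = -Complex.log (2 * b) := by
      push_cast; ring
    rw [this, Complex.exp_neg, Complex.exp_log h2b0]
    have hr2 : ((Real.sqrt (2 * Real.pi))⁻¹)^2 = (2 * Real.pi)⁻¹ := by
      rw [inv_pow, Real.sq_sqrt (by positivity)]
    rw [hr2, Complex.real_smul]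
    have hπ : ((Real.pi : ℝ) : ℂ) ≠ 0 := Complex.ofReal_ne_zero.mpr Real.pi_ne_zero
    push_cast
    field_simp
  · rw [Complex.real_smul]
    rw [Complex.cpow_def_of_ne_zero hπb0, mul_comm (Complex.log _)]
    have h12 : ((1:ℂ)/2) = (((1:ℝ)/2 : ℝ) : ℂ) := by push_cast; ring
    rw [h12, Complex.re_ofReal_mul]
    have hu := exp_mul_log_re_pos hπbre (r := 1/2) (by rw [_root_.abs_of_nonneg] <;> norm_num)
    have hs : 0 < (Real.sqrt (2 * Real.pi))⁻¹ := by positivity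
    exact mul_pos hs hu
  · have h12 : (-(1 / 2 : ℂ)) = ((-(1/2 : ℝ) : ℝ) : ℂ) := by push_cast; ring
    rw [h12]
    exact exp_mul_log_re_pos h2bre (by rw [abs_neg, _root_.abs_of_nonneg] <;> norm_num)

lemma lintegral_pi_prod {n : ℕ} (μ : Measure ℝ) [SigmaFinite μ] (g : Fin n → ℝ → ℝ≥0∞)
    (hg : ∀ i, Measurable (g i)) :
    ∫⁻ x : Fin n → ℝ, ∏ i, g i (x i) ∂Measure.pi (fun _ => μ) = ∏ i, ∫⁻ x, g i x ∂μ := by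
  induction n with
  | zero => simp [lintegral_const, Measure.pi_univ]
  | succ m ih =>
    have hmp := (measurePreserving_piFinSuccAbove (fun _ : Fin (m+1) => μ) 0).symm
    have hmeas : Measurable fun x : Fin (m+1) → ℝ => ∏ i, g i (x i) :=
      Finset.measurable_prod _ fun i _ => (hg i).comp (measurable_pi_apply i)
    rw [← hmp.lintegral_comp hmeas]
    simp only [MeasurableEquiv.piFinSuccAbove_symm_apply, Fin.insertNthEquiv,
      Fin.prod_univ_succ, Fin.insertNth_zero, Equiv.coe_fn_mk, Fin.cons_succ,
      Fin.zero_succAbove, Fin.cons_zero, Fin.cases_zero, Fin.cases_succ, cast_eq]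
    rw [lintegral_prod_mul (f := g 0) (g := fun y : Fin m → ℝ => ∏ i, g i.succ (y i))
      (hg 0).aemeasurable
      (Finset.measurable_prod _ fun i _ =>
        (hg i.succ).comp (measurable_pi_apply i)).aemeasurable]
    rw [ih (fun i => g i.succ) (fun i => hg i.succ)]

lemma indicator_univ_pi {ι : Type*} [Fintype ι] {α : ι → Type*} (s : ∀ i, Set (α i))
    (g : ∀ i, α i → ℝ≥0∞) (x : ∀ i, α i) :
    (Set.univ.pi s).indicator (fun x => ∏ i, g i (x i)) x
      = ∏ i, (s i).indicator (g i) (x i) := by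
  by_cases h : x ∈ Set.univ.pi s
  · rw [Set.indicator_of_mem h]
    exact Finset.prod_congr rfl fun i _ => (Set.indicator_of_mem (h i (Set.mem_univ i)) _).symm
  · rw [Set.indicator_of_notMem h]
    rw [Set.mem_univ_pi] at h
    push_neg at h
    obtain ⟨i, hi⟩ := h
    exact (Finset.prod_eq_zero (Finset.mem_univ i) (Set.indicator_of_notMem hi _)).symm

lemma pi_gaussian_withDensity (n : ℕ) :
    Measure.pi (fun _ : Fin n => gaussianReal 0 1)
      = (volume : Measure (Fin n → ℝ)).withDensity
          (fun x => ((∏ i, Real.toNNReal (gaussianPDFReal 0 1 (x i)) : ℝ≥0) : ℝ≥0∞)) := by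
  refine Measure.pi_eq fun s hs => ?_
  rw [withDensity_apply _ (MeasurableSet.univ_pi hs)]
  rw [← lintegral_indicator (MeasurableSet.univ_pi hs)]
  have : ∀ x : Fin n → ℝ,
      (Set.univ.pi s).indicator
        (fun x => ((∏ i, Real.toNNReal (gaussianPDFReal 0 1 (x i)) : ℝ≥0) : ℝ≥0∞)) x
      = ∏ i, (s i).indicator (fun t => ((Real.toNNReal (gaussianPDFReal 0 1 t) : ℝ≥0) : ℝ≥0∞)) (x i) := by
    intro x
    rw [← indicator_univ_pi s (fun _ t => ((Real.toNNReal (gaussianPDFReal 0 1 t) : ℝ≥0) : ℝ≥0∞)) x]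
    congr 1
    ext y
    rw [ENNReal.coe_finset_prod]
  simp_rw [this]
  rw [show (volume : Measure (Fin n → ℝ)) = Measure.pi (fun _ => (volume : Measure ℝ)) from rfl]
  rw [lintegral_pi_prod _ _ (fun i =>
    ((measurable_gaussianPDFReal 0 1).real_toNNReal.coe_nnreal_ennreal).indicator (hs i))]
  refine Finset.prod_congr rfl fun i _ => ?_
  rw [lintegral_indicator (hs i), gaussianReal_apply 0 one_ne_zero (s i)]
  rfl

lemma integral_gaussian_pi_comp_orth {n : ℕ} (M : Matrix (Fin n) (Fin n) ℝ)
    (h1 : Mᵀ * M = 1) (f : (Fin n → ℝ) → ℂ) :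
    ∫ x, f (M *ᵥ x) ∂(Measure.pi fun _ : Fin n => gaussianReal 0 1)
      = ∫ x, f x ∂(Measure.pi fun _ : Fin n => gaussianReal 0 1) := by
  classical
  have h2 : M * Mᵀ = 1 := mul_eq_one_comm.mp h1
  have hdet1 : M.det * M.det = 1 := by
    have := congrArg Matrix.det h1
    rwa [Matrix.det_mul, Matrix.det_transpose, Matrix.det_one] at this
  have hdet0 : M.det ≠ 0 := by
    intro h; rw [h, mul_zero] at hdet1; exact zero_ne_one hdet1
  have habs : |M.det| = 1 := by
    have : |M.det| * |M.det| = 1 := by rw [← abs_mul, hdet1, abs_one]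
    nlinarith [abs_nonneg M.det]
  -- sum of squares preserved
  have hsq : ∀ x : Fin n → ℝ, ∑ i, (M *ᵥ x) i ^ 2 = ∑ i, x i ^ 2 := by
    intro x
    have e1 : ∑ i, (M *ᵥ x) i ^ 2 = (M *ᵥ x) ⬝ᵥ (M *ᵥ x) := by
      simp [dotProduct, sq]
    have e2 : ∑ i, x i ^ 2 = x ⬝ᵥ x := by simp [dotProduct, sq]
    rw [e1, e2, Matrix.dotProduct_mulVec, ← Matrix.mulVec_transpose,
      Matrix.mulVec_mulVec, h1, Matrix.one_mulVec]
  -- density invariance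
  set ρ : (Fin n → ℝ) → ℝ≥0 := fun x => ∏ i, Real.toNNReal (gaussianPDFReal 0 1 (x i)) with hρ
  have hρmeas : Measurable ρ :=
    Finset.measurable_prod _ fun i _ =>
      ((measurable_gaussianPDFReal 0 1).comp (measurable_pi_apply i)).real_toNNReal
  have hρinv : ∀ x, ρ (M *ᵥ x) = ρ x := by
    intro x
    have key : ∀ y : Fin n → ℝ, (ρ y : ℝ) = ∏ i, gaussianPDFReal 0 1 (y i) := by
      intro y
      rw [hρ]
      push_cast
      exact Finset.prod_congr rfl fun i _ =>
        Real.coe_toNNReal _ (gaussianPDFReal_nonneg 0 1 (y i))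
    have hprod : ∀ y : Fin n → ℝ,
        ∏ i, gaussianPDFReal 0 1 (y i)
          = (Real.sqrt (2 * Real.pi))⁻¹ ^ n * Real.exp (-(∑ i, y i ^ 2) / 2) := by
      intro y
      have : ∀ t : ℝ, gaussianPDFReal 0 1 t = (Real.sqrt (2 * Real.pi))⁻¹ * Real.exp (-(t^2)/2) := by
        intro t; simp [gaussianPDFReal]
      simp_rw [this]
      rw [Finset.prod_mul_distrib, Finset.prod_const, ← Real.exp_sum, Finset.card_univ,
        Fintype.card_fin]
      congr 1
      rw [← Finset.sum_div, ← Finset.sum_neg_distrib]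
    have := hsq x
    apply NNReal.coe_injective
    rw [key, key, hprod, hprod, this]
  -- measurable equiv from M
  have hcomp1 : (Matrix.toLin' M).comp (Matrix.toLin' Mᵀ) = LinearMap.id := by
    rw [← Matrix.toLin'_mul, h2, Matrix.toLin'_one]
  have hcomp2 : (Matrix.toLin' Mᵀ).comp (Matrix.toLin' M) = LinearMap.id := by
    rw [← Matrix.toLin'_mul, h1, Matrix.toLin'_one]
  set e : (Fin n → ℝ) ≃ₗ[ℝ] (Fin n → ℝ) :=
    LinearEquiv.ofLinear (Matrix.toLin' M) (Matrix.toLin' Mᵀ) hcomp1 hcomp2 with he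
  set me : (Fin n → ℝ) ≃ᵐ (Fin n → ℝ) :=
    e.toContinuousLinearEquiv.toHomeomorph.toMeasurableEquiv with hme
  have hmecoe : (me : (Fin n → ℝ) → (Fin n → ℝ)) = fun x => M *ᵥ x := by
    funext x
    show e x = M *ᵥ x
    simp [he, Matrix.toLin'_apply]
  have hmp : MeasurePreserving me (volume : Measure (Fin n → ℝ)) volume := by
    refine ⟨me.measurable, ?_⟩
    rw [hmecoe]
    have : (fun x : Fin n → ℝ => M *ᵥ x) = ⇑(Matrix.toLin' M) := by
      funext x; rw [Matrix.toLin'_apply]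
    rw [this, Real.map_matrix_volume_pi_eq_smul_volume_pi hdet0]
    rw [abs_inv, habs]
    norm_num
  -- main computation
  rw [pi_gaussian_withDensity n,
    integral_withDensity_eq_integral_smul hρmeas,
    integral_withDensity_eq_integral_smul hρmeas]
  calc ∫ x, ρ x • f (M *ᵥ x) = ∫ x, ρ (M *ᵥ x) • f (M *ᵥ x) := by
        simp_rw [hρinv]
    _ = ∫ x, (fun y => ρ y • f y) (me x) := by rw [hmecoe]
    _ = ∫ y, ρ y • f y := hmp.integral_comp me.measurableEmbedding (fun y => ρ y • f y)

lemma integral_pi_gaussian_prod {n : ℕ} (F : Fin n → ℝ → ℂ) :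
    ∫ x : Fin n → ℝ, ∏ j, F j (x j) ∂(Measure.pi fun _ => gaussianReal 0 1)
      = ∏ j, ∫ t, F j t ∂(gaussianReal 0 1) := by
  letI : MeasureSpace ℝ := ⟨gaussianReal 0 1⟩
  haveI : SigmaFinite (volume : Measure ℝ) := by
    show SigmaFinite (gaussianReal 0 1); infer_instance
  have h := integral_fintype_prod_volume_eq_prod (𝕜 := ℂ) (ι := Fin n) (fun j => F j)
  rw [volume_pi] at h
  exact h

theorem stmt8 {n : ℕ} (D : Matrix (Fin n) (Fin n) ℝ) (hD : D.IsHermitian) :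
    ∫ x : Fin n → ℝ, Complex.exp (Complex.I * ((x ⬝ᵥ (D *ᵥ x) : ℝ) : ℂ))
        ∂(Measure.pi fun _ => gaussianReal 0 1)
      = ∏ j, Complex.exp (-(1 / 2 : ℂ) *
          Complex.log (1 - 2 * Complex.I * (hD.eigenvalues j : ℂ))) := by
  classical
  set lam := hD.eigenvalues with hlam
  set U : Matrix (Fin n) (Fin n) ℝ := (hD.eigenvectorUnitary : Matrix (Fin n) (Fin n) ℝ) with hUdef
  have hstar : star U = Uᵀ := Matrix.conjTranspose_eq_transpose_of_trivial U
  have hUmem := hD.eigenvectorUnitary.2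
  rw [Unitary.mem_iff] at hUmem
  have hUUt : U * Uᵀ = 1 := by rw [← hstar]; exact hUmem.2
  have h1 : (Uᵀ)ᵀ * Uᵀ = 1 := by rw [Matrix.transpose_transpose]; exact hUUt
  have hquad : ∀ x : Fin n → ℝ, x ⬝ᵥ D *ᵥ x = ∑ j, lam j * ((Uᵀ *ᵥ x) j)^2 := by
    intro x
    conv_lhs => rw [hD.spectral_theorem, Unitary.conjStarAlgAut_apply]
    rw [← Matrix.mulVec_mulVec, ← Matrix.mulVec_mulVec, Matrix.dotProduct_mulVec,
      ← Matrix.mulVec_transpose, hstar]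
    have : diagonal (RCLike.ofReal ∘ lam) = diagonal lam := by
      rw [RCLike.ofReal_real_eq_id]; rfl
    rw [this]
    simp only [dotProduct, Matrix.mulVec_diagonal]
    exact Finset.sum_congr rfl fun j _ => by ring
  have step1 : (fun x : Fin n → ℝ => Complex.exp (Complex.I * ((x ⬝ᵥ D *ᵥ x : ℝ) : ℂ)))
      = fun x => (fun y : Fin n → ℝ =>
          Complex.exp (Complex.I * ((∑ j, lam j * (y j)^2 : ℝ) : ℂ))) (Uᵀ *ᵥ x) := by
    funext x; rw [hquad x]
  rw [step1, integral_gaussian_pi_comp_orth Uᵀ h1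
    (fun y : Fin n → ℝ => Complex.exp (Complex.I * ((∑ j, lam j * (y j)^2 : ℝ) : ℂ)))]
  have step2 : (fun y : Fin n → ℝ =>
        Complex.exp (Complex.I * ((∑ j, lam j * (y j)^2 : ℝ) : ℂ)))
      = fun y => ∏ j, Complex.exp (Complex.I * (lam j : ℂ) * (y j : ℂ)^2) := by
    funext y
    push_cast
    rw [Finset.mul_sum, Complex.exp_sum]
    exact Finset.prod_congr rfl fun j _ => by ring_nf
  rw [step2, integral_pi_gaussian_prod
    (fun j t => Complex.exp (Complex.I * (lam j : ℂ) * (t : ℂ)^2))]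
  exact Finset.prod_congr rfl fun j _ => onedim (lam j)
end

section
/- Let C be a real symmetric positive definite n×n matrix and let M_1,…,M_K be real symmetric n×n matrices that are orthonormal with respect to the Frobenius inner product (⟨M_k, M_{k'}⟩_F = 1{k = k'}). Define the K×K matrix Γ by Γ_{k,k'} = 2·tr(M_k C^{-1} M_{k'} C^{-1}). Then for every t ∈ ℝ^K, t^⊤ Γ t ≥ 2‖C‖_sp^{-2}·‖t‖^2; in particular Γ is symmetric positive definite. -/
open Matrix

namespace Stmt11Aux

variable {n : ℕ}

lemma trPSD {A : Matrix (Fin n) (Fin n) ℝ} (hA : A.PosSemidef) : 0 ≤ A.trace := by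
  rw [Matrix.trace]
  refine Finset.sum_nonneg fun i _ => ?_
  have h := hA.dotProduct_mulVec_nonneg (Pi.single i 1)
  simpa [dotProduct, Matrix.mulVec, Pi.single_apply, Matrix.diag] using h

open scoped MatrixOrder in
lemma trMulPSD {A B : Matrix (Fin n) (Fin n) ℝ} (hA : A.PosSemidef) (hB : B.PosSemidef) :
    0 ≤ (A * B).trace := by
  obtain ⟨R, rfl⟩ : ∃ R : Matrix (Fin n) (Fin n) ℝ, A = Rᴴ * R :=
    ⟨CFC.sqrt A, by rw [(Matrix.nonneg_iff_posSemidef.mp (CFC.sqrt_nonneg A)).isHermitian.eq,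
      CFC.sqrt_mul_sqrt_self A hA.nonneg]⟩
  have : (Rᴴ * R * B).trace = (R * B * Rᴴ).trace := by
    rw [Matrix.mul_assoc, Matrix.trace_mul_comm]
  rw [this]
  exact trPSD (hB.mul_mul_conjTranspose_same R)

lemma keyIneq {S T : Matrix (Fin n) (Fin n) ℝ} (hS : S.PosSemidef) {c : ℝ} (hc : 0 ≤ c)
    (hSc : (S - c • 1).PosSemidef) (hT : Tᵀ = T) :
    c ^ 2 * (T * T).trace ≤ (T * S * T * S).trace := by
  have hTH : Tᴴ = T := by rw [Matrix.conjTranspose_eq_transpose_of_trivial, hT]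
  have h1 : 0 ≤ ((T * S * T) * (S - c • 1)).trace := by
    refine trMulPSD ?_ hSc
    have := hS.conjTranspose_mul_mul_same T
    rwa [hTH] at this
  have h2 : 0 ≤ ((T * (S - c • 1)) * T).trace := by
    refine trPSD ?_
    have := hSc.conjTranspose_mul_mul_same T
    rwa [hTH] at this
  have hid : T * S * T * S =
      (T * S * T) * (S - c • 1) + c • ((T * (S - c • 1)) * T) + (c ^ 2) • (T * T) := by
    simp only [Matrix.mul_sub, Matrix.sub_mul, mul_smul_comm, smul_mul_assoc, Matrix.mul_one,
      smul_sub, smul_smul, pow_two]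
    abel
  rw [hid, Matrix.trace_add, Matrix.trace_add, Matrix.trace_smul, Matrix.trace_smul]
  have := mul_nonneg hc h2
  simp only [smul_eq_mul]
  linarith

lemma dotmv (A B : Matrix (Fin n) (Fin n) ℝ) (v w : Fin n → ℝ) :
    (A *ᵥ v) ⬝ᵥ (B *ᵥ w) = v ⬝ᵥ ((Aᵀ * B) *ᵥ w) := by
  rw [Matrix.dotProduct_mulVec, ← Matrix.vecMul_transpose, Matrix.vecMul_vecMul,
    ← Matrix.dotProduct_mulVec]

lemma quadC_le (C : Matrix (Fin n) (Fin n) ℝ) (x : Fin n → ℝ) :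
    x ⬝ᵥ (C *ᵥ x) ≤ spNorm C * (x ⬝ᵥ x) := by
  set X : EuclideanSpace ℝ (Fin n) := (WithLp.equiv 2 _).symm x with hX
  have h1 : x ⬝ᵥ (C *ᵥ x) = inner ℝ X (Matrix.toEuclideanCLM (𝕜 := ℝ) C X) := by
    rw [hX]
    simp [PiLp.inner_apply, dotProduct, Matrix.toLin'_apply, mul_comm]
  have h2 : x ⬝ᵥ x = ‖X‖ ^ 2 := by
    rw [← real_inner_self_eq_norm_sq, hX]
    simp [PiLp.inner_apply, dotProduct]
    rw [EuclideanSpace.norm_eq, Real.sq_sqrt (by positivity)]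
    simp only [Real.norm_eq_abs, sq_abs, pow_two, abs_mul_abs_self]
  rw [h1, h2]
  calc inner ℝ X (Matrix.toEuclideanCLM (𝕜 := ℝ) C X)
      ≤ ‖X‖ * ‖Matrix.toEuclideanCLM (𝕜 := ℝ) C X‖ := real_inner_le_norm _ _
    _ ≤ ‖X‖ * (spNorm C * ‖X‖) := by
        refine mul_le_mul_of_nonneg_left ((Matrix.toEuclideanCLM (𝕜 := ℝ) C).le_opNorm X)
          (norm_nonneg _)
    _ = spNorm C * ‖X‖ ^ 2 := by ring

open scoped MatrixOrder in
lemma inv_sub_posSemidef {C : Matrix (Fin n) (Fin n) ℝ} (hC : C.PosDef) :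
    (C⁻¹ - (spNorm C)⁻¹ • 1).PosSemidef := by
  have hS : (C⁻¹).PosDef := hC.inv
  have hSpsd := hS.posSemidef
  have hCT : Cᵀ = C := by
    rw [← Matrix.conjTranspose_eq_transpose_of_trivial, hC.isHermitian]
  set R := CFC.sqrt C⁻¹ with hRdef
  have hRR : R * R = C⁻¹ := CFC.sqrt_mul_sqrt_self _ hSpsd.nonneg
  have hRT : Rᵀ = R := by
    rw [← Matrix.conjTranspose_eq_transpose_of_trivial, (Matrix.nonneg_iff_posSemidef.mp (CFC.sqrt_nonneg C⁻¹)).isHermitian]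
  have hCS : C * C⁻¹ = 1 := Matrix.mul_nonsing_inv C (isUnit_iff_ne_zero.mpr hC.det_pos.ne')
  rw [Matrix.posSemidef_iff_dotProduct_mulVec]
  constructor
  · refine hS.isHermitian.sub ?_
    simp [Matrix.IsHermitian, Matrix.conjTranspose_smul]
  intro x
  have hstar : star x = x := funext fun i => star_trivial _
  rw [hstar, Matrix.sub_mulVec, dotProduct_sub, Matrix.smul_mulVec,
    Matrix.one_mulVec, dotProduct_smul, smul_eq_mul, sub_nonneg]
  set a := x ⬝ᵥ x with ha
  set b := x ⬝ᵥ (C⁻¹ *ᵥ x) with hb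
  have ha0 : 0 ≤ a := by
    rw [ha]; exact Finset.sum_nonneg fun i _ => mul_self_nonneg _
  have hb0 : 0 ≤ b := by
    have := hSpsd.dotProduct_mulVec_nonneg x; rwa [hstar] at this
  have hN0 : 0 ≤ spNorm C := norm_nonneg _
  have hcs : a ^ 2 ≤ (x ⬝ᵥ (C *ᵥ x)) * b := by
    have e1 : ((R * C) *ᵥ x) ⬝ᵥ (R *ᵥ x) = a := by
      rw [dotmv, Matrix.transpose_mul, hRT, hCT, Matrix.mul_assoc, hRR, hCS, Matrix.one_mulVec]
    have e2 : ((R * C) *ᵥ x) ⬝ᵥ ((R * C) *ᵥ x) = x ⬝ᵥ (C *ᵥ x) := by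
      rw [dotmv, Matrix.transpose_mul, hRT, hCT]
      have : C * R * (R * C) = C := by
        rw [Matrix.mul_assoc, ← Matrix.mul_assoc R R C, hRR, ← Matrix.mul_assoc, hCS,
          Matrix.one_mul]
      rw [this]
    have e3 : (R *ᵥ x) ⬝ᵥ (R *ᵥ x) = b := by
      rw [dotmv, hRT, hRR]
    have hgen := Finset.sum_mul_sq_le_sq_mul_sq Finset.univ ((R * C) *ᵥ x) (R *ᵥ x)
    calc a ^ 2 = (((R * C) *ᵥ x) ⬝ᵥ (R *ᵥ x)) ^ 2 := by rw [e1]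
      _ ≤ (∑ i, ((R * C) *ᵥ x) i ^ 2) * ∑ i, (R *ᵥ x) i ^ 2 := hgen
      _ = (x ⬝ᵥ (C *ᵥ x)) * b := by
          rw [← e2, ← e3]; simp [dotProduct, pow_two]
  have hCx := quadC_le C x
  rcases eq_or_lt_of_le ha0 with h | h
  · rw [← h, mul_zero]; exact hb0
  · have key : a * a ≤ spNorm C * a * b := by nlinarith
    have hNb : 0 < spNorm C * b := by nlinarith
    have hN : 0 < spNorm C := by
      rcases hN0.lt_or_eq with h' | h'
      · exact h'
      · exfalso; rw [← h', zero_mul] at hNb; exact lt_irrefl _ hNb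
    rw [inv_mul_le_iff₀ hN]
    have h5 : a * a ≤ a * (spNorm C * b) := by nlinarith
    exact le_of_mul_le_mul_left h5 h

end Stmt11Aux

open Stmt11Aux in
theorem stmt11 {n K : ℕ} (C : Matrix (Fin n) (Fin n) ℝ) (hC : C.PosDef)
    (M : Fin K → Matrix (Fin n) (Fin n) ℝ) (hsym : ∀ k, (M k).IsHermitian)
    (horth : ∀ k k', Matrix.trace (M k * (M k')ᵀ) = if k = k' then 1 else 0) :
    (∀ t : Fin K → ℝ,
        t ⬝ᵥ ((Matrix.of fun k k' => 2 * Matrix.trace (M k * C⁻¹ * M k' * C⁻¹)) *ᵥ t)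
          ≥ 2 * (∑ i, (t i) ^ 2) / spNorm C ^ 2)
    ∧ (Matrix.of fun k k' => 2 * Matrix.trace (M k * C⁻¹ * M k' * C⁻¹)).PosDef := by
  have hMT : ∀ k, (M k)ᵀ = M k := fun k => by
    rw [← Matrix.conjTranspose_eq_transpose_of_trivial, hsym k]
  have hST : (C⁻¹)ᵀ = C⁻¹ := by
    rw [← Matrix.conjTranspose_eq_transpose_of_trivial, hC.inv.isHermitian]
  have hSpsd : (C⁻¹).PosSemidef := hC.inv.posSemidef
  have hc0 : (0:ℝ) ≤ (spNorm C)⁻¹ := inv_nonneg.mpr (norm_nonneg _)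
  -- Part 1
  have part1 : ∀ t : Fin K → ℝ,
      t ⬝ᵥ ((Matrix.of fun k k' => 2 * Matrix.trace (M k * C⁻¹ * M k' * C⁻¹)) *ᵥ t)
        ≥ 2 * (∑ i, (t i) ^ 2) / spNorm C ^ 2 := by
    intro t
    set S := C⁻¹ with hSdef
    set T := ∑ k, t k • M k with hT
    have hTT : Tᵀ = T := by
      rw [hT, Matrix.transpose_sum]
      exact Finset.sum_congr rfl fun k _ => by rw [Matrix.transpose_smul, hMT]
    have ea : t ⬝ᵥ ((Matrix.of fun k k' => 2 * Matrix.trace (M k * S * M k' * S)) *ᵥ t)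
        = 2 * Matrix.trace (T * S * T * S) := by
      have expand : T * S * T * S = ∑ k, ∑ k', (t k * t k') • (M k * S * M k' * S) := by
        rw [Matrix.mul_assoc (T * S) T S, hT]
        rw [Finset.sum_mul, Finset.sum_mul]
        simp only [smul_mul_assoc, Finset.mul_sum, Finset.sum_mul, mul_smul_comm, smul_smul,
          Matrix.mul_assoc]
        exact Finset.sum_congr rfl fun k _ => Finset.sum_congr rfl fun k' _ => by
          rw [mul_comm (t k') (t k)]
      rw [expand]
      simp only [Matrix.trace_sum, Matrix.trace_smul, smul_eq_mul, Matrix.mulVec,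
        dotProduct, Matrix.of_apply, Finset.mul_sum]
      refine Finset.sum_congr rfl fun k _ => Finset.sum_congr rfl fun k' _ => by ring
    have eb : Matrix.trace (T * T) = ∑ i, (t i) ^ 2 := by
      have expand2 : T * T = ∑ k, ∑ k', (t k * t k') • (M k * M k') := by
        rw [hT, Finset.sum_mul]
        simp only [smul_mul_assoc, Finset.mul_sum, Finset.sum_mul, mul_smul_comm, smul_smul]
        exact Finset.sum_congr rfl fun k _ => Finset.sum_congr rfl fun k' _ => by
          rw [mul_comm (t k') (t k)]
      rw [expand2]
      simp only [Matrix.trace_sum, Matrix.trace_smul, smul_eq_mul]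
      have : ∀ k k', Matrix.trace (M k * M k') = if k = k' then (1:ℝ) else 0 := by
        intro k k'; rw [← hMT k', horth]
      simp only [this, mul_ite, mul_one, mul_zero]
      simp [Finset.sum_ite_eq', pow_two]
    have key := keyIneq hSpsd hc0 (inv_sub_posSemidef hC) hTT
    rw [ge_iff_le, ea, eb] at *
    have : 2 * (∑ i, (t i) ^ 2) / spNorm C ^ 2
        = 2 * (((spNorm C)⁻¹) ^ 2 * (∑ i, (t i) ^ 2)) := by
      rw [div_eq_mul_inv, ← inv_pow]; ring
    rw [this]
    linarith
  refine ⟨part1, Matrix.posDef_iff_dotProduct_mulVec.mpr ⟨?_, ?_⟩⟩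
  · -- Hermitian
    have tsym : ∀ k k', Matrix.trace (M k * C⁻¹ * M k' * C⁻¹)
        = Matrix.trace (M k' * C⁻¹ * M k * C⁻¹) := by
      intro k k'
      conv_lhs => rw [← Matrix.trace_transpose]
      simp only [Matrix.transpose_mul, hMT, hST]
      rw [Matrix.trace_mul_comm]
      simp [Matrix.mul_assoc]
    ext k k'
    simp only [Matrix.conjTranspose_apply, Matrix.of_apply, star_trivial]
    rw [tsym]
  · -- positivity
    intro t ht
    have hstar : star t = t := funext fun i => star_trivial _
    rw [hstar]
    have h1 := part1 t
    have hsum : 0 < ∑ i, (t i) ^ 2 := by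
      obtain ⟨i, hi⟩ := Function.ne_iff.mp ht
      exact Finset.sum_pos' (fun j _ => sq_nonneg _)
        ⟨i, Finset.mem_univ i, by simpa [pow_two] using mul_self_pos.mpr hi⟩
    have hKpos : 0 < K := by
      by_contra h
      push_neg at h
      interval_cases K
      exact ht (funext fun i => i.elim0)
    have k₀ : Fin K := ⟨0, hKpos⟩
    have hn : 0 < n := by
      by_contra h
      push_neg at h
      interval_cases n
      have := horth k₀ k₀
      simp [Matrix.trace] at this
    have hCne : C ≠ 0 := by
      intro h
      have hd := hC.det_pos
      haveI : Nonempty (Fin n) := ⟨⟨0, hn⟩⟩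
      rw [h, Matrix.det_zero] at hd
      exact lt_irrefl _ hd
    have hN : 0 < spNorm C := by
      rw [spNorm, norm_pos_iff]
      intro h
      apply hCne
      have := congrArg (Matrix.toEuclideanCLM (𝕜 := ℝ)).symm h
      simpa using this
    have : 0 < 2 * (∑ i, (t i) ^ 2) / spNorm C ^ 2 := by positivity
    linarith
end

section
/- Let h : [0,1]×[−π,π] → ℝ be a bounded measurable function and let n ≥ 1. Define the complex n×n matrix θ(h) by θ(h)_{j+1,j'+1} = ∫_{−π}^{π} exp(i(j−j')x)·h(min(j,j')/n, x) dx for j,j' = 0,…,n−1. Then ‖θ(h)‖_F² ≤ 12π²·n·‖h‖_∞², where ‖h‖_∞ is the supremum norm of h. -/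
open Real

open MeasureTheory Complex in
open scoped ComplexConjugate in
private lemma orth_aux (m : ℤ) : (∫ x in Set.Ioc (-π) π, Complex.exp (Complex.I * (m:ℂ) * x)) =
    if m = 0 then (2*π : ℂ) else 0 := by
  rw [← intervalIntegral.integral_of_le (by linarith [pi_pos] : -π ≤ π)]
  split_ifs with hm
  · subst hm
    simp [Complex.ofReal_neg]; ring
  · have hc : (Complex.I * (m:ℂ)) ≠ 0 := by
      simp [Complex.I_ne_zero, hm]
    have := integral_exp_mul_complex (a := -π) (b := π) hc
    rw [show (fun x : ℝ => Complex.exp (Complex.I * (m:ℂ) * x)) = fun x : ℝ => Complex.exp ((Complex.I * (m:ℂ)) * x) from rfl, this]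
    have h1 : Complex.I * (m:ℂ) * (π:ℂ) = ((m*π : ℝ):ℂ) * Complex.I := by push_cast; ring
    have h2 : Complex.I * (m:ℂ) * ((-π:ℝ):ℂ) = ((-(m*π) : ℝ):ℂ) * Complex.I := by push_cast; ring
    rw [h1, h2, Complex.exp_mul_I, Complex.exp_mul_I]
    have hr : Real.sin ((m:ℝ)*π) = 0 := Real.sin_int_mul_pi m
    have hr2 : Real.sin (-((m:ℝ)*π)) = 0 := by rw [Real.sin_neg, hr, neg_zero]
    have hs : Complex.sin (((m:ℝ)*π:ℝ):ℂ) = 0 := by rw [← Complex.ofReal_sin, hr]; simp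
    have hs2 : Complex.sin ((-((m:ℝ)*π):ℝ):ℂ) = 0 := by rw [← Complex.ofReal_sin, hr2]; simp
    have hcc : Complex.cos ((-((m:ℝ)*π):ℝ):ℂ) = Complex.cos (((m:ℝ)*π:ℝ):ℂ) := by
      rw [← Complex.ofReal_cos, ← Complex.ofReal_cos, Real.cos_neg]
    rw [hs, hs2, hcc]
    simp

open MeasureTheory Complex in
open scoped ComplexConjugate in
private lemma bessel_aux (g : ℝ → ℂ) (hg : Measurable g) (C : ℝ)
    (hbd : ∀ x ∈ Set.Ioc (-π) π, ‖g x‖ ≤ C) (S : Finset ℤ) :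
    ∑ k ∈ S, ‖∫ x in (-π)..π, Complex.exp (Complex.I * (k:ℂ) * x) * g x‖ ^ 2
      ≤ 4 * π^2 * C^2 := by
  have hπ := pi_pos
  have hle : -π ≤ π := by linarith
  have hC0 : 0 ≤ C := le_trans (norm_nonneg _) (hbd π ⟨by linarith, le_refl _⟩)
  simp only [intervalIntegral.integral_of_le hle]
  set T : Set ℝ := Set.Ioc (-π) π with hT
  have hTmeas : MeasurableSet T := measurableSet_Ioc
  have hTfin : volume T < ⊤ := by rw [hT, Real.volume_Ioc]; exact ENNReal.ofReal_lt_top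
  -- integrability helper
  have hIb : ∀ (f : ℝ → ℂ) (M : ℝ), Measurable f → (∀ x ∈ T, ‖f x‖ ≤ M) →
      IntegrableOn f T := by
    intro f M hf hM
    have hMint : IntegrableOn (fun _ : ℝ => M) T := by
      refine integrableOn_const hTfin.ne
    refine Integrable.mono' hMint hf.aestronglyMeasurable.restrict ?_
    exact (ae_restrict_iff' hTmeas).2 (ae_of_all _ hM)
  -- the exponentials
  set e : ℤ → ℝ → ℂ := fun m x => Complex.exp (Complex.I * (m:ℂ) * x) with he
  have he_meas : ∀ m, Measurable (e m) := by
    intro m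
    exact Complex.measurable_exp.comp (by fun_prop)
  have he_norm : ∀ (m : ℤ) (x : ℝ), ‖e m x‖ = 1 := by
    intro m x
    have h1 : Complex.I * (m:ℂ) * (x:ℂ) = ((m*x:ℝ):ℂ) * Complex.I := by push_cast; ring
    rw [he]; simp only [h1]; exact Complex.norm_exp_ofReal_mul_I _
  have hconj_e : ∀ (m:ℤ) (x:ℝ), conj (Complex.exp (-(Complex.I * (m:ℂ) * x)))
      = e m x := by
    intro m x
    rw [he, ← Complex.exp_conj]
    congr 1
    simp only [map_neg, map_mul, Complex.conj_I, Complex.conj_ofReal, map_intCast]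
    ring
  have hEE : ∀ (k k' : ℤ) (x : ℝ),
      Complex.exp (-(Complex.I * (k:ℂ) * x)) * e k' x = e (k' - k) x := by
    intro k k' x
    rw [he]
    simp only
    rw [← Complex.exp_add]
    congr 1
    push_cast
    ring
  -- coefficients
  set c : ℤ → ℂ := fun k => ∫ x in T, e k x * g x with hc
  set A : ℝ := ∑ k ∈ S, Complex.normSq (c k) with hA
  have hA0 : 0 ≤ A := Finset.sum_nonneg fun k _ => Complex.normSq_nonneg _
  -- approximant
  set p : ℝ → ℂ := fun x => ((2*π:ℝ):ℂ)⁻¹ * ∑ k ∈ S, c k * Complex.exp (-(Complex.I * (k:ℂ) * x)) with hp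
  have hp_meas : Measurable p := by
    apply Measurable.const_mul
    apply Finset.measurable_sum
    intro k _
    exact (Complex.measurable_exp.comp (by fun_prop)).const_mul _
  set Mp : ℝ := ‖((2*π:ℝ):ℂ)⁻¹‖ * ∑ k ∈ S, ‖c k‖ with hMp
  have hp_bd : ∀ x : ℝ, ‖p x‖ ≤ Mp := by
    intro x
    rw [hp, hMp]
    simp only [norm_mul]
    refine mul_le_mul_of_nonneg_left ?_ (norm_nonneg _)
    refine le_trans (norm_sum_le _ _) (Finset.sum_le_sum fun k _ => ?_)
    rw [norm_mul]
    have h2 : -(Complex.I * (k:ℂ) * (x:ℝ)) = ((-(k*x):ℝ):ℂ) * Complex.I := by push_cast; ring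
    rw [h2, Complex.norm_exp_ofReal_mul_I, mul_one]
  have hconjp : ∀ x : ℝ, conj (p x) = ((2*π:ℝ):ℂ)⁻¹ * ∑ k ∈ S, conj (c k) * e k x := by
    intro x
    rw [hp]
    rw [map_mul, map_sum, map_inv₀, Complex.conj_ofReal]
    congr 1
    refine Finset.sum_congr rfl fun k _ => ?_
    rw [map_mul, hconj_e]
  -- integrability of products
  have hInt_eg : ∀ m : ℤ, IntegrableOn (fun x => e m x * g x) T := by
    intro m
    refine hIb _ C ((he_meas m).mul hg) fun x hx => ?_
    rw [norm_mul, he_norm, one_mul]; exact hbd x hx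
  have hconjp_meas : Measurable fun x => conj (p x) := by
    exact continuous_star.measurable.comp hp_meas
  have hconjg_meas : Measurable fun x => conj (g x) := by
    exact continuous_star.measurable.comp hg
  have hInt_gp : IntegrableOn (fun x => g x * conj (p x)) T := by
    refine hIb _ (C * Mp) (hg.mul hconjp_meas) fun x hx => ?_
    rw [norm_mul]
    exact mul_le_mul (hbd x hx) (by rw [RCLike.norm_conj]; exact hp_bd x) (norm_nonneg _) hC0
  have hInt_pp : IntegrableOn (fun x => p x * conj (p x)) T := by
    refine hIb _ (Mp * Mp) (hp_meas.mul hconjp_meas) fun x hx => ?_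
    rw [norm_mul]
    exact mul_le_mul (hp_bd x) (by rw [RCLike.norm_conj]; exact hp_bd x) (norm_nonneg _)
      (le_trans (norm_nonneg _) (hp_bd x))
  have hInt_gg : IntegrableOn (fun x => g x * conj (g x)) T := by
    refine hIb _ (C * C) (hg.mul hconjg_meas) fun x hx => ?_
    rw [norm_mul, RCLike.norm_conj]
    exact mul_le_mul (hbd x hx) (hbd x hx) (norm_nonneg _) hC0
  -- e1 : ∫ g * conj p = (2π)⁻¹ A
  have e1 : (∫ x in T, g x * conj (p x)) = ((2*π:ℝ):ℂ)⁻¹ * (A:ℂ) := by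
    have hfun : ∀ x : ℝ, g x * conj (p x)
        = ∑ k ∈ S, (((2*π:ℝ):ℂ)⁻¹ * conj (c k)) * (e k x * g x) := by
      intro x
      rw [hconjp x, Finset.mul_sum]
      rw [Finset.mul_sum]
      refine Finset.sum_congr rfl fun k _ => ?_
      ring
    simp only [hfun]
    rw [integral_finset_sum _ fun k _ => (hInt_eg k).const_mul _]
    have hterm : ∀ k ∈ S, (∫ x in T, (((2*π:ℝ):ℂ)⁻¹ * conj (c k)) * (e k x * g x))
        = ((2*π:ℝ):ℂ)⁻¹ * (Complex.normSq (c k) : ℂ) := by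
      intro k _
      rw [integral_const_mul]
      have hck : (∫ x in T, e k x * g x) = c k := rfl
      rw [hck, mul_assoc, mul_comm (conj (c k)) (c k), Complex.mul_conj]
    refine (Finset.sum_congr rfl hterm).trans ?_
    rw [← Finset.mul_sum]
    congr 1
    rw [hA]
    push_cast
    rfl
  -- e2 : ∫ p * conj p = (2π)⁻¹ A
  have e2 : (∫ x in T, p x * conj (p x)) = ((2*π:ℝ):ℂ)⁻¹ * (A:ℂ) := by
    have hfun : ∀ x : ℝ, p x * conj (p x)
        = ∑ k ∈ S, ∑ k' ∈ S,
            (((2*π:ℝ):ℂ)⁻¹ * ((2*π:ℝ):ℂ)⁻¹ * (c k * conj (c k'))) * e (k' - k) x := by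
      intro x
      rw [hconjp x, hp]
      rw [mul_mul_mul_comm, Finset.sum_mul_sum, Finset.mul_sum]
      refine Finset.sum_congr rfl fun k _ => ?_
      rw [Finset.mul_sum]
      refine Finset.sum_congr rfl fun k' _ => ?_
      rw [← hEE k k' x]
      ring
    simp only [hfun]
    rw [integral_finset_sum _ fun k _ => integrable_finset_sum _ fun k' _ =>
      (hIb (e (k' - k)) 1 (he_meas _) fun x _ => le_of_eq (he_norm _ x)).const_mul _]
    have hsplit : ∀ k ∈ S, (∫ x in T, ∑ k' ∈ S,
        (((2*π:ℝ):ℂ)⁻¹ * ((2*π:ℝ):ℂ)⁻¹ * (c k * conj (c k'))) * e (k' - k) x)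
        = ∑ k' ∈ S, ∫ x in T,
        (((2*π:ℝ):ℂ)⁻¹ * ((2*π:ℝ):ℂ)⁻¹ * (c k * conj (c k'))) * e (k' - k) x := by
      intro k _
      exact integral_finset_sum _ fun k' _ =>
        (hIb (e (k' - k)) 1 (he_meas _) fun x _ => le_of_eq (he_norm _ x)).const_mul _
    have hterm : ∀ k ∈ S, (∑ k' ∈ S, ∫ x in T,
        (((2*π:ℝ):ℂ)⁻¹ * ((2*π:ℝ):ℂ)⁻¹ * (c k * conj (c k'))) * e (k' - k) x)
        = ((2*π:ℝ):ℂ)⁻¹ * (Complex.normSq (c k) : ℂ) := by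
      intro k hk
      have hinner : ∀ k' ∈ S, (∫ x in T,
          (((2*π:ℝ):ℂ)⁻¹ * ((2*π:ℝ):ℂ)⁻¹ * (c k * conj (c k'))) * e (k' - k) x)
          = if k' = k then (((2*π:ℝ):ℂ)⁻¹ * ((2*π:ℝ):ℂ)⁻¹ * (c k * conj (c k'))) * (2*(π:ℂ)) else 0 := by
        intro k' _
        rw [integral_const_mul]
        simp only [he]
        rw [orth_aux (k' - k)]
        by_cases hkk : k' = k
        · subst hkk
          rw [sub_self, if_pos rfl, if_pos rfl]
        · have h0 : ¬ (k' - k = 0) := by omega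
          rw [if_neg h0, if_neg hkk, mul_zero]
      refine (Finset.sum_congr rfl hinner).trans ?_
      rw [Finset.sum_ite_eq' S k]
      simp only [hk, if_true]
      rw [Complex.mul_conj]
      have hπC : (π:ℂ) ≠ 0 := Complex.ofReal_ne_zero.2 pi_ne_zero
      push_cast
      field_simp
    refine ((Finset.sum_congr rfl hsplit).trans ((Finset.sum_congr rfl hterm).trans ?_))
    rw [← Finset.mul_sum]
    congr 1
    rw [hA]
    push_cast
    rfl
  -- re-integral helper
  have hre : ∀ (f : ℝ → ℂ), IntegrableOn f T → (∫ x in T, (f x).re) = (∫ x in T, f x).re := by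
    intro f hf
    have := integral_re hf
    simpa [RCLike.re_to_complex] using this
  have hre_int : ∀ (f : ℝ → ℂ), IntegrableOn f T →
      Integrable (fun x => (f x).re) (volume.restrict T) := by
    intro f hf
    exact hf.re
  -- expansion and nonnegativity
  have hpt : ∀ z w : ℂ, Complex.normSq (z - w)
      = (z * conj z).re + (w * conj w).re - 2 * (z * conj w).re := by
    intro z w
    simp only [Complex.normSq_apply, Complex.mul_re, Complex.sub_re, Complex.sub_im,
      Complex.conj_re, Complex.conj_im]
    ring
  have key : 0 ≤ (∫ x in T, (g x * conj (g x)).re) - A / (2*π) := by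
    have h0 : 0 ≤ ∫ x in T, Complex.normSq (g x - p x) :=
      integral_nonneg fun x => Complex.normSq_nonneg _
    have h1 : Integrable (fun x => (g x * conj (g x)).re + (p x * conj (p x)).re)
        (volume.restrict T) := (hre_int _ hInt_gg).add (hre_int _ hInt_pp)
    have h2 : Integrable (fun x => 2 * (g x * conj (p x)).re) (volume.restrict T) :=
      (hre_int _ hInt_gp).const_mul 2
    have hexp : (∫ x in T, Complex.normSq (g x - p x))
        = (∫ x in T, ((g x * conj (g x)).re + (p x * conj (p x)).re))
          - ∫ x in T, 2 * (g x * conj (p x)).re := by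
      rw [← integral_sub h1 h2]
      refine integral_congr_ae (ae_of_all _ fun x => ?_)
      show Complex.normSq (g x - p x)
        = (g x * conj (g x)).re + (p x * conj (p x)).re - 2 * (g x * conj (p x)).re
      rw [hpt]
    rw [hexp, integral_add (hre_int _ hInt_gg) (hre_int _ hInt_pp), integral_const_mul,
      hre _ hInt_gg, hre _ hInt_pp, hre _ hInt_gp, e1, e2] at h0
    have hre2π : (((2*π:ℝ):ℂ)⁻¹ * (A:ℂ)).re = A / (2*π) := by
      rw [← Complex.ofReal_inv, ← Complex.ofReal_mul, Complex.ofReal_re]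
      rw [inv_mul_eq_div]
    rw [hre2π] at h0
    have : (∫ x in T, g x * conj (g x)).re = ∫ x in T, (g x * conj (g x)).re :=
      (hre _ hInt_gg).symm
    rw [this] at h0
    linarith
  -- bound ∫ normSq g
  have hgg : (∫ x in T, (g x * conj (g x)).re) ≤ C^2 * (2*π) := by
    have hmono : (∫ x in T, (g x * conj (g x)).re) ≤ ∫ _x in T, C^2 := by
      refine setIntegral_mono_on (hre_int _ hInt_gg) (integrableOn_const hTfin.ne)
        hTmeas fun x hx => ?_
      rw [Complex.mul_conj, Complex.ofReal_re, Complex.normSq_eq_norm_sq]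
      exact pow_le_pow_left₀ (norm_nonneg _) (hbd x hx) 2
    refine hmono.trans ?_
    rw [setIntegral_const]
    rw [hT, measureReal_def, Real.volume_Ioc]
    rw [ENNReal.toReal_ofReal (by linarith)]
    rw [smul_eq_mul]
    nlinarith
  have hfinal : A ≤ 4 * π^2 * C^2 := by
    have h1 : A / (2*π) ≤ C^2 * (2*π) := by linarith
    have h2π : (0:ℝ) < 2*π := by linarith
    have := (div_le_iff₀ h2π).1 h1
    nlinarith
  calc ∑ k ∈ S, ‖∫ x in T, Complex.exp (Complex.I * (k:ℂ) * x) * g x‖ ^ 2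
      = A := by
        rw [hA]
        refine Finset.sum_congr rfl fun k _ => ?_
        exact Complex.sq_norm _
  _ ≤ 4 * π^2 * C^2 := hfinal

open MeasureTheory Complex in
open scoped ComplexConjugate in
theorem stmt15 {n : ℕ} (hn : 1 ≤ n) (h : ℝ → ℝ → ℝ) (D : ℝ)
    (hmeas : Measurable (Function.uncurry h))
    (hbd : ∀ t ∈ Set.Icc (0 : ℝ) 1, ∀ x ∈ Set.Icc (-π) π, |h t x| ≤ D) :
    ∑ j : Fin n, ∑ j' : Fin n,
        ‖∫ x in (-π)..π,
          Complex.exp (Complex.I * ((j.1 : ℂ) - (j'.1 : ℂ)) * (x : ℂ)) *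
            ((h (((min j.1 j'.1 : ℕ) : ℝ) / n) x : ℝ) : ℂ)‖ ^ 2
      ≤ 12 * π ^ 2 * n * D ^ 2 := by
  have hπ := pi_pos
  have hD0 : 0 ≤ D := le_trans (abs_nonneg _)
    (hbd 0 ⟨le_refl _, zero_le_one⟩ 0 ⟨by linarith, by linarith⟩)
  have hn0 : (0:ℝ) < n := by exact_mod_cast Nat.pos_of_ne_zero (by omega)
  set G : ℕ → ℝ → ℂ := fun m x => ((h ((m:ℝ)/n) x : ℝ) : ℂ) with hG
  have hGmeas : ∀ m, Measurable (G m) := by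
    intro m
    exact Complex.measurable_ofReal.comp
      (hmeas.comp (measurable_const.prodMk measurable_id))
  have hGbd : ∀ m : ℕ, m < n → ∀ x ∈ Set.Ioc (-π) π, ‖G m x‖ ≤ D := by
    intro m hm x hx
    rw [hG]
    simp only [Complex.norm_real, Real.norm_eq_abs]
    refine hbd _ ⟨by positivity, ?_⟩ x ⟨le_of_lt hx.1, hx.2⟩
    rw [div_le_one hn0]
    exact_mod_cast hm.le
  set Entry : Fin n → Fin n → ℝ := fun j j' =>
    ‖∫ x in (-π)..π,
      Complex.exp (Complex.I * ((j.1 : ℂ) - (j'.1 : ℂ)) * (x : ℂ)) *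
        ((h (((min j.1 j'.1 : ℕ) : ℝ) / n) x : ℝ) : ℂ)‖ ^ 2 with hE
  have hEntry : ∀ (j j' : Fin n) (m : ℕ), min j.1 j'.1 = m →
      Entry j j' = ‖∫ x in (-π)..π,
        Complex.exp (Complex.I * ((((j.1:ℤ) - (j'.1:ℤ)):ℤ):ℂ) * (x:ℂ)) * G m x‖ ^ 2 := by
    intro j j' m hm
    rw [hE, hG]
    have harg : ∀ x : ℝ,
        Complex.exp (Complex.I * ((j.1 : ℂ) - (j'.1 : ℂ)) * (x : ℂ)) *
          ((h (((min j.1 j'.1 : ℕ) : ℝ) / n) x : ℝ) : ℂ)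
        = Complex.exp (Complex.I * ((((j.1:ℤ) - (j'.1:ℤ)):ℤ):ℂ) * (x:ℂ)) *
          ((h ((m:ℝ)/n) x : ℝ) : ℂ) := by
      intro x
      rw [hm]
      norm_num
    simp only [harg]
  -- row bound
  have hrow : ∀ j : Fin n, (∑ j' ∈ Finset.univ.filter (fun j' : Fin n => j.1 ≤ j'.1),
      Entry j j') ≤ 4 * π^2 * D^2 := by
    intro j
    have hinj : ∀ a ∈ Finset.univ.filter (fun j' : Fin n => j.1 ≤ j'.1),
        ∀ b ∈ Finset.univ.filter (fun j' : Fin n => j.1 ≤ j'.1),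
        ((j.1:ℤ) - a.1) = ((j.1:ℤ) - b.1) → a = b := by
      intro a _ b _ hab
      have : a.1 = b.1 := by omega
      exact Fin.ext this
    have := bessel_aux (G j.1) (hGmeas j.1) D (hGbd j.1 j.2) 
      ((Finset.univ.filter (fun j' : Fin n => j.1 ≤ j'.1)).image (fun j' : Fin n => (j.1:ℤ) - j'.1))
    rw [Finset.sum_image hinj] at this
    refine le_trans (le_of_eq ?_) this
    refine Finset.sum_congr rfl fun j' hj' => ?_
    have hle' : j.1 ≤ j'.1 := (Finset.mem_filter.1 hj').2
    exact hEntry j j' j.1 (min_eq_left hle')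
  -- column bound
  have hcol : ∀ j' : Fin n, (∑ j ∈ Finset.univ.filter (fun j : Fin n => j'.1 < j.1),
      Entry j j') ≤ 4 * π^2 * D^2 := by
    intro j'
    have hinj : ∀ a ∈ Finset.univ.filter (fun j : Fin n => j'.1 < j.1),
        ∀ b ∈ Finset.univ.filter (fun j : Fin n => j'.1 < j.1),
        ((a.1:ℤ) - j'.1) = ((b.1:ℤ) - j'.1) → a = b := by
      intro a _ b _ hab
      have : a.1 = b.1 := by omega
      exact Fin.ext this
    have := bessel_aux (G j'.1) (hGmeas j'.1) D (hGbd j'.1 j'.2)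
      ((Finset.univ.filter (fun j : Fin n => j'.1 < j.1)).image (fun j : Fin n => (j.1:ℤ) - j'.1))
    rw [Finset.sum_image hinj] at this
    refine le_trans (le_of_eq ?_) this
    refine Finset.sum_congr rfl fun j hj => ?_
    have hlt : j'.1 < j.1 := (Finset.mem_filter.1 hj).2
    exact hEntry j j' j'.1 (min_eq_right hlt.le)
  -- split and swap
  have hsplit : ∀ j : Fin n, (∑ j' : Fin n, Entry j j')
      = (∑ j' ∈ Finset.univ.filter (fun j' : Fin n => j.1 ≤ j'.1), Entry j j')
        + ∑ j' ∈ Finset.univ.filter (fun j' : Fin n => ¬ j.1 ≤ j'.1), Entry j j' := by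
    intro j
    exact (Finset.sum_filter_add_sum_filter_not _ _ _).symm
  have hswap : (∑ j : Fin n, ∑ j' ∈ Finset.univ.filter (fun j' : Fin n => ¬ j.1 ≤ j'.1), Entry j j')
      = ∑ j' : Fin n, ∑ j ∈ Finset.univ.filter (fun j : Fin n => j'.1 < j.1), Entry j j' := by
    simp only [Finset.sum_filter]
    rw [Finset.sum_comm]
    refine Finset.sum_congr rfl fun j' _ => Finset.sum_congr rfl fun j _ => ?_
    exact if_congr (by omega) rfl rfl
  have hgoal : (∑ j : Fin n, ∑ j' : Fin n, Entry j j') ≤ 12 * π ^ 2 * n * D ^ 2 := by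
    calc ∑ j : Fin n, ∑ j' : Fin n, Entry j j'
        = (∑ j : Fin n, ∑ j' ∈ Finset.univ.filter (fun j' : Fin n => j.1 ≤ j'.1), Entry j j')
          + ∑ j : Fin n, ∑ j' ∈ Finset.univ.filter (fun j' : Fin n => ¬ j.1 ≤ j'.1), Entry j j' := by
          rw [← Finset.sum_add_distrib]
          exact Finset.sum_congr rfl fun j _ => hsplit j
      _ = (∑ j : Fin n, ∑ j' ∈ Finset.univ.filter (fun j' : Fin n => j.1 ≤ j'.1), Entry j j')
          + ∑ j' : Fin n, ∑ j ∈ Finset.univ.filter (fun j : Fin n => j'.1 < j.1), Entry j j' := by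
          rw [hswap]
      _ ≤ (n : ℝ) * (4 * π^2 * D^2) + (n : ℝ) * (4 * π^2 * D^2) := by
          gcongr ?_ + ?_
          · calc (∑ j : Fin n, ∑ j' ∈ Finset.univ.filter (fun j' : Fin n => j.1 ≤ j'.1), Entry j j')
                ≤ ∑ _j : Fin n, 4 * π^2 * D^2 := Finset.sum_le_sum fun j _ => hrow j
              _ = (n : ℝ) * (4 * π^2 * D^2) := by
                  rw [Finset.sum_const, Finset.card_univ, Fintype.card_fin, nsmul_eq_mul]
          · calc (∑ j' : Fin n, ∑ j ∈ Finset.univ.filter (fun j : Fin n => j'.1 < j.1), Entry j j')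
                ≤ ∑ _j' : Fin n, 4 * π^2 * D^2 := Finset.sum_le_sum fun j' _ => hcol j'
              _ = (n : ℝ) * (4 * π^2 * D^2) := by
                  rw [Finset.sum_const, Finset.card_univ, Fintype.card_fin, nsmul_eq_mul]
      _ ≤ 12 * π ^ 2 * n * D ^ 2 := by
          nlinarith [mul_nonneg (mul_nonneg hn0.le (sq_nonneg π)) (sq_nonneg D)]
  exact hgoal
end
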